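/- arXiv:math/0401324 — 5 statements merged into one kernel-verified Lean document; each statement's English description precedes it below -/
import Mathlib

section
/- Let c = s_1 s_2 ⋯ s_n be the Coxeter element of the universal Coxeter group W_n. If (t_1,…,t_n) is a tuple of reflections with t_1 t_2 ⋯ t_n = c, then the contents (middle letters of the palindromic normal forms) of t_1,…,t_n are exactly s_1,…,s_n, each occurring once. (Proof via the abelianization of W_n, which is (Z/2)^n.) -/
/-- The elementary Hurwitz move `σ_i` on `n`-tuples of a group `G`
(0-indexed: acts on entries `i` and `i+1`). -/
def hmove (n : ℕ) (G : Type*) [Group G] (i : ℕ) (hi : i + 1 < n)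
    (g : Fin n → G) : Fin n → G := fun j =>
  if (j : ℕ) = i then g ⟨i, by omega⟩ * g ⟨i + 1, hi⟩ * (g ⟨i, by omega⟩)⁻¹
  else if (j : ℕ) = i + 1 then g ⟨i, by omega⟩
  else g j

/-- One elementary step of the Hurwitz action. -/
def hstep (n : ℕ) (G : Type*) [Group G] (a b : Fin n → G) : Prop :=
  ∃ (i : ℕ) (hi : i + 1 < n), b = hmove n G i hi a

/-- Braid relations: generators `σ_1, …, σ_{n-1}` indexed by `Fin (n-1)`. -/
def braidRels (n : ℕ) : Set (FreeGroup (Fin (n - 1))) :=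
  { r | (∃ i j : Fin (n - 1), (i : ℕ) + 1 = (j : ℕ) ∧
          r = FreeGroup.of i * FreeGroup.of j * FreeGroup.of i *
            (FreeGroup.of j * FreeGroup.of i * FreeGroup.of j)⁻¹) ∨
        (∃ i j : Fin (n - 1), (i : ℕ) + 1 < (j : ℕ) ∧
          r = FreeGroup.of i * FreeGroup.of j * (FreeGroup.of j * FreeGroup.of i)⁻¹) }

/-- The braid group `B_n`. -/
abbrev BraidGroup (n : ℕ) := PresentedGroup (braidRels n)

/-- Relations of the universal Coxeter group: each generator squares to 1. -/
def coxRels (n : ℕ) : Set (FreeGroup (Fin n)) :=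
  { r | ∃ i, r = FreeGroup.of i * FreeGroup.of i }

/-- The universal Coxeter group `W_n`. -/
abbrev UCox (n : ℕ) := PresentedGroup (coxRels n)

/-- The generator `s_i` of `W_n`. -/
def sgen {n : ℕ} (i : Fin n) : UCox n := PresentedGroup.of i

/-- The Coxeter element `c = s_1 ⋯ s_n`. -/
def coxElt (n : ℕ) : UCox n := (List.ofFn fun i => sgen i).prod

/-- The set `T` of reflections of `W_n`: conjugates of generators. -/
def Refl (n : ℕ) : Set (UCox n) := { t | ∃ w i, t = w * sgen i * w⁻¹ }

/-- `Red_T(c)`: `n`-tuples of reflections with product `c`. -/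
def RedT (n : ℕ) : Set (Fin n → UCox n) :=
  { t | (∀ i, t i ∈ Refl n) ∧ (List.ofFn t).prod = coxElt n }

/-- The set `R` of braid reflections of the free group: conjugates of generators. -/
def Rset (n : ℕ) : Set (FreeGroup (Fin n)) :=
  { r | ∃ w i, r = w * FreeGroup.of i * w⁻¹ }

/-- `g = f_1 ⋯ f_n`. -/
def gElt (n : ℕ) : FreeGroup (Fin n) := (List.ofFn fun i => FreeGroup.of i).prod

/-- `Red_R(g)`: `n`-tuples from `R` with product `g`. -/
def RedR (n : ℕ) : Set (Fin n → FreeGroup (Fin n)) :=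
  { t | (∀ i, t i ∈ Rset n) ∧ (List.ofFn t).prod = gElt n }

/-- The canonical projection `π : F_n → W_n`, `f_i ↦ s_i`. -/
def pr (n : ℕ) : FreeGroup (Fin n) →* UCox n := FreeGroup.lift fun i => sgen i

/-- Length of an element of `W_n`: the length of its normal form. -/
noncomputable def wordLength {n : ℕ} (w : UCox n) : ℕ :=
  sInf { m | ∃ l : List (Fin n),
    List.Chain' (· ≠ ·) l ∧ l.length = m ∧ (l.map sgen).prod = w }

lemma sgen_sq {n : ℕ} (i : Fin n) : sgen i * sgen i = 1 := by
  have h : PresentedGroup.mk (coxRels n) (FreeGroup.of i * FreeGroup.of i) = 1 := by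
    apply (QuotientGroup.eq_one_iff _).mpr
    exact Subgroup.subset_normalClosure ⟨i, rfl⟩
  simpa [sgen, PresentedGroup.of, map_mul] using h

lemma sgen_inv {n : ℕ} (i : Fin n) : (sgen i)⁻¹ = sgen i := by
  rw [inv_eq_iff_mul_eq_one, sgen_sq]

noncomputable def ab (n : ℕ) : UCox n →* Multiplicative (Fin n → ZMod 2) :=
  PresentedGroup.toGroup (f := fun i => Multiplicative.ofAdd (Pi.single i 1)) (by
    rintro r ⟨i, rfl⟩
    rw [map_mul, FreeGroup.lift_apply_of]
    refine Multiplicative.toAdd.injective ?_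
    simp [← Pi.single_add]
    decide)

lemma ab_sgen {n : ℕ} (i : Fin n) : ab n (sgen i) = Multiplicative.ofAdd (Pi.single i 1) := by
  simp [ab, sgen, PresentedGroup.toGroup.of]


lemma prod_reverse_map_sgen {n : ℕ} (l : List (Fin n)) :
    ((l.reverse.map sgen).prod) = ((l.map sgen).prod)⁻¹ := by
  induction l with
  | nil => simp
  | cons a l ih =>
      rw [List.reverse_cons, List.map_append, List.prod_append, ih]
      simp [mul_inv_rev, sgen_inv]

lemma not_chain'_split {α : Type*} (l : List α) (h : ¬ List.Chain' (· ≠ ·) l) :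
    ∃ a x b, l = a ++ x :: x :: b := by
  induction l with
  | nil => simp [List.Chain'] at h
  | cons y l ih =>
    match l, h, ih with
    | [], h, _ => simp [List.Chain'] at h
    | z :: l, h, ih =>
      rw [List.Chain', List.isChain_cons_cons] at h
      push_neg at h
      by_cases hyz : y = z
      · exact ⟨[], y, l, by simp [hyz]⟩
      · obtain ⟨a, x, b, hab⟩ := ih (h hyz)
        exact ⟨y :: a, x, b, by simp [hab]⟩


lemma exists_word_aux {n : ℕ} (w : UCox n) :
    ∃ l : List (Fin n), (l.map sgen).prod = w := by
  refine PresentedGroup.induction_on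
    (C := fun w => ∃ l : List (Fin n), (l.map sgen).prod = w) w ?_
  intro z
  induction z using FreeGroup.induction_on with
  | C1 => exact ⟨[], by simp⟩
  | of i => exact ⟨[i], by simp; rfl⟩
  | inv_of i _ => exact ⟨[i], by simp [map_inv]; rw [← sgen_inv]; rfl⟩
  | mul x y hx hy =>
    obtain ⟨l1, hl1⟩ := hx
    obtain ⟨l2, hl2⟩ := hy
    exact ⟨l1 ++ l2, by rw [List.map_append, List.prod_append, hl1, hl2, map_mul]⟩

lemma exists_word {n : ℕ} (w : UCox n) :
    ∃ l : List (Fin n), List.Chain' (· ≠ ·) l ∧ (l.map sgen).prod = w := by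
  obtain ⟨l, hl⟩ := exists_word_aux w
  have key : ∀ m : ℕ, ∀ l : List (Fin n), l.length = m →
      ∃ l' : List (Fin n), List.Chain' (· ≠ ·) l' ∧
        (l'.map sgen).prod = (l.map sgen).prod := by
    intro m
    induction m using Nat.strong_induction_on with
    | _ m ih =>
      intro l hlen
      by_cases hc : List.Chain' (· ≠ ·) l
      · exact ⟨l, hc, rfl⟩
      · obtain ⟨a, x, b, rfl⟩ := not_chain'_split l hc
        obtain ⟨l', hc', hp'⟩ := ih (a.length + b.length)
          (by subst hlen; simp) (a ++ b) (by simp)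
        refine ⟨l', hc', hp'.trans ?_⟩
        simp only [List.map_append, List.prod_append, List.map_cons, List.prod_cons]
        rw [← mul_assoc (sgen x), sgen_sq, one_mul]
  obtain ⟨l', hc', hp'⟩ := key l.length l rfl
  exact ⟨l', hc', hp'.trans hl⟩

lemma sgen_sq' {n : ℕ} (i : Fin n) (x : UCox n) : sgen i * (sgen i * x) = x := by
  rw [← mul_assoc, sgen_sq, one_mul]

lemma chain'_palindrome {n : ℕ} (u : List (Fin n)) (c : Fin n)
    (hu : List.Chain' (· ≠ ·) u) (hlast : ∀ x ∈ u.getLast?, x ≠ c) :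
    List.Chain' (· ≠ ·) (u ++ c :: u.reverse) := by
  rw [List.Chain', List.isChain_append]
  refine ⟨hu, ?_, ?_⟩
  · rw [List.isChain_cons]
    refine ⟨?_, ?_⟩
    · intro y hy
      rw [List.head?_reverse] at hy
      exact (hlast y hy).symm
    · rw [List.isChain_reverse]
      exact List.IsChain.imp (fun a b h => by exact fun h' => h h'.symm) hu
      all_goals exact fun a b h => by exact fun h' => h h'.symm
  · intro x hx y hy
    simp only [List.head?_cons, Option.mem_some_iff] at hy
    subst hy
    exact hlast x hx

lemma pal_prod {n : ℕ} (u : List (Fin n)) (c : Fin n) :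
    ((u ++ c :: u.reverse).map sgen).prod
      = (u.map sgen).prod * sgen c * ((u.map sgen).prod)⁻¹ := by
  rw [List.map_append, List.prod_append, List.map_cons, List.prod_cons,
    prod_reverse_map_sgen, mul_assoc]

lemma refl_palindrome {n : ℕ} (l : List (Fin n)) (hl : List.Chain' (· ≠ ·) l) (j : Fin n) :
    ∃ (c : Fin n) (u : List (Fin n)),
      List.Chain' (· ≠ ·) (u ++ c :: u.reverse) ∧
      ((u ++ c :: u.reverse).map sgen).prod
        = (l.map sgen).prod * sgen j * ((l.map sgen).prod)⁻¹ := by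
  by_cases h : l.getLast? = some j
  · -- l ends with j : drop the last letter
    have hne : l ≠ [] := by rintro rfl; simp at h
    have hdec : l = l.dropLast ++ [j] := by
      conv_lhs => rw [← List.dropLast_append_getLast hne]
      rw [List.getLast?_eq_getLast hne, Option.some_inj] at h
      rw [h]
    set u := l.dropLast with hu
    rw [hdec, List.Chain', List.isChain_append] at hl
    obtain ⟨hcu, -, hlast⟩ := hl
    have hlast' : ∀ x ∈ u.getLast?, x ≠ j := fun x hx => hlast x hx j (by simp)
    refine ⟨j, u, chain'_palindrome u j hcu hlast', ?_⟩
    rw [pal_prod, hdec]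
    simp only [List.map_append, List.prod_append, List.map_cons, List.prod_cons,
      List.map_nil, List.prod_nil, mul_one, mul_inv_rev, sgen_inv]
    rw [mul_assoc _ (sgen j), mul_assoc _ (sgen j), sgen_sq', mul_assoc]
  · have hlast' : ∀ x ∈ l.getLast?, x ≠ j := by
      intro x hx hxj
      exact h (by rw [← hxj]; exact hx)
    exact ⟨j, l, chain'_palindrome l j hl hlast', pal_prod l j⟩


/-- If `(t_1,…,t_n)` is a tuple of reflections with product the Coxeter element `c`,
then the contents (middle letters of the palindromic normal forms) are exactly
`s_1,…,s_n`, each occurring once. -/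
theorem contents_are_all_generators (n : ℕ) (t : Fin n → UCox n) (ht : t ∈ RedT n) :
    ∃ cont : Fin n → Fin n, Function.Bijective cont ∧
      ∀ i, ∃ u : List (Fin n),
        List.Chain' (· ≠ ·) (u ++ cont i :: u.reverse) ∧
        ((u ++ cont i :: u.reverse).map sgen).prod = t i := by
  obtain ⟨hrefl, hprod⟩ := ht
  have H : ∀ i, ∃ (c : Fin n) (u : List (Fin n)),
      List.Chain' (· ≠ ·) (u ++ c :: u.reverse) ∧
      ((u ++ c :: u.reverse).map sgen).prod = t i := by
    intro i
    obtain ⟨w, j, hw⟩ := hrefl i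
    obtain ⟨l, hc, hp⟩ := exists_word w
    obtain ⟨c, u, h1, h2⟩ := refl_palindrome l hc j
    exact ⟨c, u, h1, by rw [h2, hp, ← hw]⟩
  choose cont u hch hpr using H
  refine ⟨cont, ?_, fun i => ⟨u i, hch i, hpr i⟩⟩
  -- abelianization computation
  have habt : ∀ i, ab n (t i) = Multiplicative.ofAdd (Pi.single (cont i) 1) := by
    intro i
    rw [← hpr i, pal_prod, map_mul, map_mul, map_inv, ab_sgen,
      mul_comm ((ab n) ((List.map sgen (u i)).prod)), mul_assoc,
      mul_inv_cancel, mul_one]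
  have hab_prod : ∀ (f : Fin n → UCox n),
      ab n ((List.ofFn f).prod) = ∏ i, ab n (f i) := by
    intro f
    rw [map_list_prod, List.map_ofFn, List.prod_ofFn]
    rfl
  have key : (∏ i, Multiplicative.ofAdd (Pi.single (cont i) (1 : ZMod 2)))
      = ∏ i : Fin n, Multiplicative.ofAdd (Pi.single i (1 : ZMod 2)) := by
    calc (∏ i, Multiplicative.ofAdd (Pi.single (cont i) (1 : ZMod 2)))
        = ∏ i, ab n (t i) := by simp_rw [habt]
      _ = ab n ((List.ofFn t).prod) := (hab_prod t).symm
      _ = ab n (coxElt n) := by rw [hprod]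
      _ = ∏ i, ab n (sgen i) := hab_prod _
      _ = _ := by simp_rw [ab_sgen]
  have hsum : (∑ i, Pi.single (cont i) (1 : ZMod 2))
      = ∑ i : Fin n, Pi.single i (1 : ZMod 2) := by
    have := key
    rw [← ofAdd_sum, ← ofAdd_sum] at this
    exact Multiplicative.ofAdd.injective this
  have hsurj : Function.Surjective cont := by
    intro k
    by_contra hk
    push_neg at hk
    have hk' := congrFun hsum k
    rw [Finset.sum_apply, Finset.sum_apply] at hk'
    have hL : (∑ i, (Pi.single (cont i) (1 : ZMod 2) : Fin n → ZMod 2) k) = 0 := by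
      refine Finset.sum_eq_zero fun i _ => ?_
      rw [Pi.single_apply]
      simp [Ne.symm (hk i)]
    have hR : (∑ i : Fin n, (Pi.single i (1 : ZMod 2) : Fin n → ZMod 2) k) = 1 := by
      rw [Finset.sum_pi_single]
      simp
    rw [hL, hR] at hk'
    exact one_ne_zero hk'.symm
  exact Finite.surjective_iff_bijective.mp hsurj
end

section
/- The Hurwitz action of the braid group B_n is transitive on the set Red_T(c) of n-tuples of reflections of the universal Coxeter group W_n whose product equals the Coxeter element c = s_1 ⋯ s_n. -/
/- ===== auxiliary development ===== -/

namespace UCoxNF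

variable {n : ℕ}

theorem sgen_mul_self (i : Fin n) : sgen i * sgen i = 1 := by
  have : (FreeGroup.of i * FreeGroup.of i) ∈ coxRels n := ⟨i, rfl⟩
  have h1 : PresentedGroup.mk (coxRels n) (FreeGroup.of i * FreeGroup.of i) = 1 := by
    apply (QuotientGroup.eq_one_iff _).2
    exact Subgroup.subset_normalClosure this
  rw [map_mul] at h1
  exact h1

theorem sgen_inv (i : Fin n) : (sgen i)⁻¹ = sgen i := by
  rw [inv_eq_iff_mul_eq_one]; exact sgen_mul_self i

/-- evaluation of a word -/
def eval (l : List (Fin n)) : UCox n := (l.map sgen).prod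

@[simp] theorem eval_nil : eval ([] : List (Fin n)) = 1 := rfl
@[simp] theorem eval_cons (i : Fin n) (l : List (Fin n)) :
    eval (i :: l) = sgen i * eval l := by simp [eval]
@[simp] theorem eval_append (l₁ l₂ : List (Fin n)) :
    eval (l₁ ++ l₂) = eval l₁ * eval l₂ := by simp [eval]

theorem eval_reverse (l : List (Fin n)) : eval l.reverse = (eval l)⁻¹ := by
  induction l with
  | nil => simp
  | cons i l ih => simp [ih, mul_inv_rev, sgen_inv]

/-- reduced words -/
abbrev Red (l : List (Fin n)) : Prop := List.Chain' (· ≠ ·) l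

/-- the type of reduced words -/
def M (n : ℕ) := { l : List (Fin n) // Red l }

/-- the elementary action of a generator on a reduced word -/
def fact (i : Fin n) : List (Fin n) → List (Fin n)
  | [] => [i]
  | (a :: l) => if a = i then l else i :: a :: l

theorem red_fact (i : Fin n) (l : List (Fin n)) (h : Red l) : Red (fact i l) := by
  cases l with
  | nil => simp [fact, Red, List.Chain']
  | cons a l =>
    by_cases hai : a = i
    · have ht : Red l := List.IsChain.tail h
      simpa [fact, hai] using ht
    · have hia : i ≠ a := fun he => hai he.symm
      simpa [fact, hai, Red, List.Chain', List.isChain_cons_cons] using ⟨hia, h⟩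

theorem fact_fact (i : Fin n) (l : List (Fin n)) (h : Red l) : fact i (fact i l) = l := by
  cases l with
  | nil => simp [fact]
  | cons a l =>
    by_cases hai : a = i
    · subst hai
      cases l with
      | nil => simp [fact]
      | cons b l =>
        have hab : a ≠ b := (List.isChain_cons_cons.1 h).1
        have hba : ¬ (b = a) := fun he => hab he.symm
        simp [fact, hba]
    · have hia : ¬ (i = a) := fun he => hai he.symm
      simp [fact, hai, hia]

/-- the permutation of reduced words induced by a generator -/
def σperm (i : Fin n) : Equiv.Perm (M n) :=
  { toFun := fun l => ⟨fact i l.1, red_fact i l.1 l.2⟩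
    invFun := fun l => ⟨fact i l.1, red_fact i l.1 l.2⟩
    left_inv := fun l => Subtype.ext (fact_fact i l.1 l.2)
    right_inv := fun l => Subtype.ext (fact_fact i l.1 l.2) }

theorem σperm_sq (i : Fin n) : σperm i * σperm i = 1 := by
  apply Equiv.ext
  intro l
  show (σperm i) ((σperm i) l) = l
  exact Subtype.ext (fact_fact i l.1 l.2)

/-- the action of the group on reduced words -/
def φact : UCox n →* Equiv.Perm (M n) :=
  PresentedGroup.toGroup (f := σperm) (by
    rintro r ⟨i, rfl⟩
    simp only [map_mul, FreeGroup.lift_apply_of]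
    exact σperm_sq i)

@[simp] theorem φact_sgen (i : Fin n) : φact (sgen i) = σperm i :=
  PresentedGroup.toGroup.of _

/-- the empty reduced word -/
def mEmpty : M n := ⟨[], by simp [Red, List.Chain']⟩

/-- the normal form -/
def nf (w : UCox n) : List (Fin n) := ((φact w) mEmpty).1

theorem red_nf (w : UCox n) : Red (nf w) := ((φact w) mEmpty).2

theorem eval_fact (i : Fin n) (l : List (Fin n)) :
    eval (fact i l) = sgen i * eval l := by
  cases l with
  | nil => simp [fact]
  | cons a l =>
    by_cases hai : a = i
    · subst hai
      simp [fact, ← mul_assoc, sgen_mul_self]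
    · simp [fact, hai]

theorem eval_φact (w : UCox n) (l : M n) :
    eval ((φact w) l).1 = w * eval l.1 := by
  let H : Subgroup (UCox n) :=
    { carrier := { w | ∀ l : M n, eval ((φact w) l).1 = w * eval l.1 }
      one_mem' := by intro l; simp
      mul_mem' := by
        intro a b ha hb l
        simp only [map_mul, Equiv.Perm.mul_apply]
        rw [ha, hb, mul_assoc]
      inv_mem' := by
        intro a ha l
        have := ha ((φact a)⁻¹ l)
        simp only [map_inv] at *
        rw [← Equiv.Perm.mul_apply, mul_inv_cancel] at this
        simp only [Equiv.Perm.one_apply] at this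
        rw [this, ← mul_assoc, inv_mul_cancel, one_mul] }
  have : w ∈ H := by
    apply PresentedGroup.generated_by
    intro j l
    show eval ((φact (sgen j)) l).1 = sgen j * eval l.1
    rw [φact_sgen]
    exact eval_fact j l.1
  exact this l

@[simp] theorem eval_nf (w : UCox n) : eval (nf w) = w := by
  have := eval_φact w mEmpty
  simpa [nf, mEmpty] using this

theorem φact_eval (l : List (Fin n)) (h : Red l) : (φact (eval l)) mEmpty = ⟨l, h⟩ := by
  induction l with
  | nil => simp [mEmpty]; rfl
  | cons i l ih =>
    have hl : Red l := h.tail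
    rw [eval_cons, map_mul, Equiv.Perm.mul_apply, ih hl, φact_sgen]
    apply Subtype.ext
    show fact i l = i :: l
    cases l with
    | nil => rfl
    | cons a l =>
      have hia : i ≠ a := (List.isChain_cons_cons.1 h).1
      have hai : ¬ (a = i) := fun he => hia he.symm
      simp [fact, hai]

theorem nf_eval (l : List (Fin n)) (h : Red l) : nf (eval l) = l := by
  simp [nf, φact_eval l h]

@[simp] theorem nf_one : nf (1 : UCox n) = [] := by
  simpa using nf_eval ([] : List (Fin n)) (by simp [Red, List.Chain'])

@[simp] theorem nf_sgen (i : Fin n) : nf (sgen i) = [i] := by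
  simpa using nf_eval [i] (by simp [Red, List.Chain'])

theorem nf_sgen_mul (i : Fin n) (w : UCox n) : nf (sgen i * w) = fact i (nf w) := by
  simp [nf, map_mul]
  rfl

/-- length -/
def wl (w : UCox n) : ℕ := (nf w).length

@[simp] theorem wl_one : wl (1 : UCox n) = 0 := by simp [wl]
@[simp] theorem wl_sgen (i : Fin n) : wl (sgen i) = 1 := by simp [wl]

theorem wl_eval_le (l : List (Fin n)) : wl (eval l) ≤ l.length := by
  induction l with
  | nil => simp
  | cons i l ih =>
    rw [eval_cons, wl, nf_sgen_mul]
    cases h : nf (eval l) with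
    | nil => simp [fact]
    | cons a t =>
      have hlen : wl (eval l) = t.length + 1 := by rw [wl, h]; simp
      show (fact i (a :: t)).length ≤ (i :: l).length
      by_cases hai : a = i
      · rw [show fact i (a :: t) = t from by simp [fact, hai]]
        simp only [List.length_cons]
        omega
      · rw [show fact i (a :: t) = i :: a :: t from by simp [fact, hai]]
        simp only [List.length_cons]
        omega

theorem wl_mul_le (x y : UCox n) : wl (x * y) ≤ wl x + wl y := by
  have : x * y = eval (nf x ++ nf y) := by simp
  rw [this]
  calc wl (eval (nf x ++ nf y)) ≤ (nf x ++ nf y).length := wl_eval_le _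
  _ = wl x + wl y := by simp [wl]

theorem nf_inv (w : UCox n) : nf w⁻¹ = (nf w).reverse := by
  have h : Red (nf w).reverse := by
    simp only [Red, List.Chain']
    rw [List.isChain_reverse]
    exact List.IsChain.imp (fun a b hab he => hab he.symm) (red_nf w)
  have : w⁻¹ = eval (nf w).reverse := by rw [eval_reverse, eval_nf]
  rw [this, nf_eval _ h]

theorem wl_inv (w : UCox n) : wl w⁻¹ = wl w := by simp [wl, nf_inv]

end UCoxNF

/- ====== Part 2 : longest common prefix ====== -/
namespace UCoxNF

variable {n : ℕ}

/-- length of the longest common prefix -/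
def lcp : List (Fin n) → List (Fin n) → ℕ
  | a :: as, b :: bs => if a = b then lcp as bs + 1 else 0
  | _, _ => 0

@[simp] theorem lcp_cons_cons (x y : Fin n) (as bs : List (Fin n)) :
    lcp (x :: as) (y :: bs) = if x = y then lcp as bs + 1 else 0 := rfl

theorem lcp_le_left (a b : List (Fin n)) : lcp a b ≤ a.length := by
  induction a generalizing b with
  | nil => simp [lcp]
  | cons x as ih =>
    cases b with
    | nil => simp [lcp]
    | cons y bs =>
      by_cases h : x = y
      · simp only [lcp, if_pos h, List.length_cons]
        exact Nat.succ_le_succ (ih bs)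
      · simp [lcp, h]

theorem lcp_comm (a b : List (Fin n)) : lcp a b = lcp b a := by
  induction a generalizing b with
  | nil => cases b <;> simp [lcp]
  | cons x as ih =>
    cases b with
    | nil => simp [lcp]
    | cons y bs =>
      by_cases h : x = y
      · simp [lcp, h, ih bs]
      · have h' : ¬ (y = x) := fun he => h he.symm
        simp [lcp, h, h']

theorem lcp_le_right (a b : List (Fin n)) : lcp a b ≤ b.length := by
  rw [lcp_comm]; exact lcp_le_left b a

theorem take_lcp (a b : List (Fin n)) : a.take (lcp a b) = b.take (lcp a b) := by
  induction a generalizing b with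
  | nil => simp [lcp]
  | cons x as ih =>
    cases b with
    | nil => simp [lcp]
    | cons y bs =>
      by_cases h : x = y
      · subst h
        rw [show lcp (x :: as) (x :: bs) = lcp as bs + 1 by rw [lcp_cons_cons, if_pos rfl]]
        simp only [List.take_succ_cons, List.cons.injEq, true_and]
        exact ih bs
      · simp [lcp, h]

theorem le_lcp (a b : List (Fin n)) (r : ℕ) (hra : r ≤ a.length) (hrb : r ≤ b.length)
    (h : a.take r = b.take r) : r ≤ lcp a b := by
  induction a generalizing b r with
  | nil => simp at hra; omega
  | cons x as ih =>
    cases r with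
    | zero => omega
    | succ r =>
      cases b with
      | nil => simp at hrb
      | cons y bs =>
        simp only [List.take_succ_cons, List.cons.injEq] at h
        simp only [lcp, if_pos h.1]
        have := ih bs r (by simpa using hra) (by simpa using hrb) h.2
        omega

theorem getElem_lcp_ne (a b : List (Fin n)) (h1 : lcp a b < a.length) (h2 : lcp a b < b.length) :
    a[lcp a b]'h1 ≠ b[lcp a b]'h2 := by
  intro he
  have h3 : a.take (lcp a b + 1) = b.take (lcp a b + 1) := by
    rw [List.take_succ, List.take_succ, take_lcp a b]
    congr 1
    rw [List.getElem?_eq_getElem h1, List.getElem?_eq_getElem h2, he]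
  have := le_lcp a b (lcp a b + 1) h1 h2 h3
  omega

end UCoxNF

/- ====== Part 3 : reflections as palindromes ====== -/
namespace UCoxNF

variable {n : ℕ}

theorem refl_conj {x t : UCox n} (ht : t ∈ Refl n) : x * t * x⁻¹ ∈ Refl n := by
  obtain ⟨w, i, rfl⟩ := ht
  exact ⟨x * w, i, by group⟩

theorem refl_inv {t : UCox n} (ht : t ∈ Refl n) : t⁻¹ = t := by
  obtain ⟨w, i, rfl⟩ := ht
  simp [mul_inv_rev, sgen_inv, mul_assoc]

/-- the parity homomorphism -/
def εhom : UCox n →* Multiplicative (ZMod 2) :=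
  PresentedGroup.toGroup (f := fun _ => Multiplicative.ofAdd 1) (by
    rintro r ⟨i, rfl⟩
    simp only [map_mul, FreeGroup.lift_apply_of, ← ofAdd_add]
    decide)

@[simp] theorem εhom_sgen (i : Fin n) : εhom (sgen i) = Multiplicative.ofAdd 1 :=
  PresentedGroup.toGroup.of _

theorem εhom_eval (l : List (Fin n)) :
    εhom (eval l) = Multiplicative.ofAdd ((l.length : ZMod 2)) := by
  induction l with
  | nil => simp
  | cons i l ih =>
    rw [eval_cons, map_mul, εhom_sgen, ih, ← ofAdd_add, List.length_cons]
    congr 1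
    push_cast
    ring

theorem refl_wl_odd {t : UCox n} (ht : t ∈ Refl n) : wl t % 2 = 1 := by
  obtain ⟨w, i, rfl⟩ := ht
  set t := w * sgen i * w⁻¹ with hts
  have h1 : εhom t = Multiplicative.ofAdd 1 := by
    rw [hts]
    simp only [map_mul, map_inv]
    rw [mul_comm (εhom w), mul_assoc, mul_inv_cancel, mul_one, εhom_sgen]
  have h2 : εhom t = Multiplicative.ofAdd ((wl t : ZMod 2)) := by
    conv_lhs => rw [← eval_nf t]
    rw [εhom_eval]
    rfl
  rw [h1] at h2
  have h3 : ((wl t : ℕ) : ZMod 2) = 1 := (Multiplicative.ofAdd.injective h2).symm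
  rcases Nat.even_or_odd (wl t) with he | ho
  · exfalso
    obtain ⟨k, hk⟩ := he
    rw [hk] at h3
    push_cast at h3
    rw [CharTwo.add_self_eq_zero] at h3
    exact absurd h3 (by decide)
  · exact Nat.odd_iff.1 ho

theorem refl_nf_reverse {t : UCox n} (ht : t ∈ Refl n) : (nf t).reverse = nf t := by
  rw [← nf_inv, refl_inv ht]

end UCoxNF

namespace UCoxNF

variable {n : ℕ}

/-- half-length of a reflection -/
def Dof (t : UCox n) : ℕ := wl t / 2

theorem refl_len {t : UCox n} (ht : t ∈ Refl n) : (nf t).length = 2 * Dof t + 1 := by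
  have h := refl_wl_odd ht
  have : wl t = (nf t).length := rfl
  unfold Dof
  omega

theorem pal_drop {l : List (Fin n)} {D : ℕ} (hrev : l.reverse = l) (hlen : l.length = 2 * D + 1) :
    l.drop (D + 1) = (l.take D).reverse := by
  rw [List.reverse_take, hrev, show l.length - D = D + 1 by omega]

theorem pal_getElem {l : List (Fin n)} (hrev : l.reverse = l) {j : ℕ} (hj : j < l.length) :
    l[j]'hj = l[l.length - 1 - j]'(by omega) := by
  rw [List.getElem_of_eq hrev.symm hj, List.getElem_reverse]

theorem nf_refl_decomp {t : UCox n} (ht : t ∈ Refl n) :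
    nf t = (nf t).take (Dof t) ++
      (nf t)[Dof t]'(by rw [refl_len ht]; omega) :: ((nf t).take (Dof t)).reverse := by
  conv_lhs => rw [← List.take_append_drop (Dof t) (nf t)]
  congr 1
  rw [List.drop_eq_getElem_cons (by rw [refl_len ht]; omega)]
  congr 1
  exact pal_drop (refl_nf_reverse ht) (refl_len ht)

theorem refl_eq_conj {t : UCox n} (ht : t ∈ Refl n) :
    t = eval ((nf t).take (Dof t)) * sgen ((nf t)[Dof t]'(by rw [refl_len ht]; omega)) *
      (eval ((nf t).take (Dof t)))⁻¹ := by
  conv_lhs => rw [← eval_nf t, nf_refl_decomp ht]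
  rw [eval_append, eval_cons, eval_reverse, mul_assoc]

theorem wl_conj_le (g : UCox n) (y : Fin n) : wl (g * sgen y * g⁻¹) ≤ 2 * wl g + 1 := by
  calc wl (g * sgen y * g⁻¹) ≤ wl (g * sgen y) + wl g⁻¹ := wl_mul_le _ _
  _ ≤ wl g + wl (sgen y) + wl g := by rw [wl_inv]; exact Nat.add_le_add_right (wl_mul_le _ _) _
  _ = 2 * wl g + 1 := by rw [wl_sgen]; ring

/-- the key multiplication lemma: computing `nf (t * w)` for a reflection `t` -/
theorem nf_refl_mul {t w : UCox n} (ht : t ∈ Refl n)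
    (hmD : lcp (nf t) (nf w) ≤ Dof t) (hmX : lcp (nf t) (nf w) < (nf w).length) :
    nf (t * w) = (nf t).take ((nf t).length - lcp (nf t) (nf w)) ++ (nf w).drop (lcp (nf t) (nf w)) := by
  set a := nf t with ha
  set X := nf w with hX
  set m := lcp a X with hm
  have hlen : a.length = 2 * Dof t + 1 := refl_len ht
  have hrev : a.reverse = a := refl_nf_reverse ht
  have hma : m < a.length := by omega
  -- step 1 : group identity
  have hdrop : a.drop (a.length - m) = (a.take m).reverse := by
    rw [List.reverse_take, hrev]
  have htake : a.take m = X.take m := take_lcp a X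
  have e1 : t * w = eval (a.take (a.length - m) ++ X.drop m) := by
    conv_lhs => rw [← eval_nf t, ← eval_nf w, ← ha, ← hX]
    conv_lhs => rw [← List.take_append_drop (a.length - m) a, ← List.take_append_drop m X]
    rw [eval_append, eval_append, eval_append, hdrop, eval_reverse, htake]
    group
  -- step 2 : the word is reduced
  have hjunc : a[a.length - m - 1]'(by omega) ≠ X[m]'hmX := by
    have h5 : a[a.length - m - 1]'(by omega) = a[m]'hma := by
      rw [pal_getElem hrev (by omega : a.length - m - 1 < a.length)]
      have he : a.length - 1 - (a.length - m - 1) = m := by omega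
      simp only [he]
    rw [h5]
    exact getElem_lcp_ne a X hma hmX
  have hred : Red (a.take (a.length - m) ++ X.drop m) := by
    simp only [Red, List.Chain']
    rw [List.isChain_append]
    refine ⟨List.IsChain.take (red_nf t) _, List.IsChain.drop (red_nf w) _, ?_⟩
    intro x hx y hy
    rw [List.getLast?_eq_getElem?] at hx
    rw [List.head?_drop] at hy
    have hlt2 : (a.take (a.length - m)).length = a.length - m := by
      rw [List.length_take]; omega
    rw [hlt2, List.getElem?_take, if_pos (by omega : a.length - m - 1 < a.length - m),
        List.getElem?_eq_getElem (by omega : a.length - m - 1 < a.length)] at hx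
    rw [List.getElem?_eq_getElem hmX] at hy
    simp only [Option.mem_some_iff] at hx hy
    rw [← hx, ← hy]
    exact hjunc
  rw [e1, nf_eval _ hred]

end UCoxNF

namespace UCoxNF

variable {n : ℕ}

/-- maximum of half-lengths -/
def maxD (ts : List (UCox n)) : ℕ := (ts.map Dof).foldr max 0

@[simp] theorem maxD_nil : maxD ([] : List (UCox n)) = 0 := rfl
@[simp] theorem maxD_cons (t : UCox n) (ts : List (UCox n)) :
    maxD (t :: ts) = max (Dof t) (maxD ts) := rfl

theorem le_maxD {ts : List (UCox n)} {x : UCox n} (hx : x ∈ ts) : Dof x ≤ maxD ts := by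
  induction ts with
  | nil => simp at hx
  | cons t ts ih =>
    rcases List.mem_cons.1 hx with rfl | hx
    · simp [Nat.le_max_left]
    · simp only [maxD_cons]
      exact le_trans (ih hx) (Nat.le_max_right _ _)

/-- the core combinatorial lemma -/
theorem core (ts : List (UCox n)) : ∀ (t : UCox n),
    (∀ x ∈ t :: ts, x ∈ Refl n) →
    List.Chain' (fun x y => 2 * lcp (nf x) (nf y) < min (wl x) (wl y)) (t :: ts) →
    (t :: ts).length + 2 * maxD (t :: ts) ≤ wl ((t :: ts).prod) ∧
    (nf ((t :: ts).prod)).take (Dof t + 1) = (nf t).take (Dof t + 1) := by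
  induction ts with
  | nil =>
    intro t hrefl _
    have ht : t ∈ Refl n := hrefl t (by simp)
    have hlen : (nf t).length = 2 * Dof t + 1 := refl_len ht
    constructor
    · simp only [List.prod_cons, List.prod_nil, mul_one, List.length_cons, List.length_nil,
        maxD_cons, maxD_nil]
      have : wl t = 2 * Dof t + 1 := hlen
      omega
    · simp [List.prod_cons]
  | cons t' rest ih =>
    intro t hrefl hchain
    have ht : t ∈ Refl n := hrefl t (by simp)
    have ht' : t' ∈ Refl n := hrefl t' (by simp)
    have hchain' := (List.isChain_cons_cons.1 hchain).2
    have hR : 2 * lcp (nf t) (nf t') < min (wl t) (wl t') := (List.isChain_cons_cons.1 hchain).1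
    obtain ⟨hlenX, hpre⟩ := ih t' (fun x hx => hrefl x (List.mem_cons_of_mem t hx)) hchain'
    set w := (t' :: rest).prod with hw
    set X := nf w with hX
    set a := nf t with ha
    set a' := nf t' with ha'
    have hlena : a.length = 2 * Dof t + 1 := refl_len ht
    have hlena' : a'.length = 2 * Dof t' + 1 := refl_len ht'
    set m := lcp a X with hm
    have hDM : Dof t' ≤ maxD (t' :: rest) := le_maxD (by simp)
    have hXlen : (t' :: rest).length + 2 * maxD (t' :: rest) ≤ X.length := hlenX
    -- m is at most min (Dof t) (Dof t')
    have hmm : m ≤ min (Dof t) (Dof t') := by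
      by_contra hcon
      push_neg at hcon
      set r := min (Dof t) (Dof t') + 1 with hr
      have hrm : r ≤ m := hcon
      have hra : r ≤ a.length := by omega
      have hra' : r ≤ a'.length := by omega
      have h1 : a.take r = X.take r := by
        have h0 : a.take m = X.take m := take_lcp a X
        have : a.take r = (a.take m).take r := by rw [List.take_take, min_eq_left hrm]
        rw [this, h0, List.take_take, min_eq_left hrm]
      have h2 : X.take r = a'.take r := by
        have hr' : r ≤ Dof t' + 1 := by omega
        have e1 : X.take r = (X.take (Dof t' + 1)).take r := by
          rw [List.take_take, min_eq_left hr']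
        rw [e1, hpre, List.take_take, min_eq_left hr']
      have := le_lcp a a' r hra hra' (h1.trans h2)
      have hwlt : wl t = 2 * Dof t + 1 := hlena
      have hwlt' : wl t' = 2 * Dof t' + 1 := hlena'
      rw [hwlt, hwlt'] at hR
      omega
    have hmX : m < X.length := by
      have h9 := hXlen
      simp only [List.length_cons] at h9
      have e4 : m ≤ Dof t' := le_trans hmm (min_le_right _ _)
      omega
    have hmul := nf_refl_mul ht (le_trans hmm (min_le_left _ _)) hmX
    rw [← ha, ← hX, ← hm] at hmul
    have hprod : (t :: t' :: rest).prod = t * w := by rw [List.prod_cons]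
    have e2' : X.length = wl w := rfl
    clear_value w X a a' m
    constructor
    · rw [hprod, wl, hmul, List.length_append, List.length_take, List.length_drop]
      have e1 : a.length = 2 * Dof t + 1 := hlena
      have e2 : X.length = wl w := e2'
      have e3 : m ≤ Dof t := le_trans hmm (min_le_left _ _)
      have e4 : m ≤ Dof t' := le_trans hmm (min_le_right _ _)
      have e5 : (t' :: rest).length + 2 * maxD (t' :: rest) ≤ wl w := hlenX
      have e6 : Dof t' ≤ maxD (t' :: rest) := hDM
      have hM2 : maxD (t :: t' :: rest) = max (Dof t) (maxD (t' :: rest)) := rfl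
      rw [hM2]
      simp only [List.length_cons] at e5 ⊢
      rcases Nat.le_total (Dof t) (maxD (t' :: rest)) with hc | hc
      · rw [max_eq_right hc]; omega
      · rw [max_eq_left hc]
        have e7 : Dof t' ≤ Dof t := le_trans hDM hc
        omega
    · rw [hprod, hmul]
      have h6 : Dof t + 1 ≤ (a.take (a.length - m)).length := by
        rw [List.length_take]
        omega
      rw [List.take_append_of_le_length h6, List.take_take]
      congr 1
      omega

end UCoxNF

namespace UCoxNF

section HmoveLemmas

variable {G : Type*} [Group G] {n : ℕ}

theorem ofFn_eq_PQ (g : Fin n → G) (i : ℕ) (hi : i + 1 < n) :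
    List.ofFn g = (List.ofFn g).take i ++ g ⟨i, by omega⟩ :: g ⟨i+1, hi⟩ ::
      (List.ofFn g).drop (i+2) := by
  conv_lhs => rw [← List.take_append_drop i (List.ofFn g)]
  congr 1
  rw [List.drop_eq_getElem_cons (by simp; omega : i < (List.ofFn g).length)]
  congr 1
  · simp
  conv_lhs => rw [List.drop_eq_getElem_cons (by simp; omega : i + 1 < (List.ofFn g).length)]
  congr 1
  · simp

theorem ofFn_hmove_eq (g : Fin n → G) (i : ℕ) (hi : i + 1 < n) :
    List.ofFn (hmove n G i hi g) =
      (List.ofFn g).take i ++ (g ⟨i, by omega⟩ * g ⟨i+1, hi⟩ * (g ⟨i, by omega⟩)⁻¹) ::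
        g ⟨i, by omega⟩ :: (List.ofFn g).drop (i+2) := by
  rw [ofFn_eq_PQ (hmove n G i hi g) i hi]
  congr 1
  · apply List.ext_getElem (by simp)
    intro j h1 h2
    have hj : j < i := by
      have := h1
      simp [List.length_take] at this
      omega
    rw [List.getElem_take, List.getElem_take]
    simp only [List.getElem_ofFn]
    show hmove n G i hi g ⟨j, _⟩ = g ⟨j, _⟩
    simp only [hmove]
    rw [if_neg (by omega), if_neg (by omega)]
  congr 1
  · show hmove n G i hi g ⟨i, _⟩ = _
    simp only [hmove]
    simp
  congr 1
  · show hmove n G i hi g ⟨i + 1, _⟩ = _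
    simp only [hmove]
    rw [if_neg (by omega : ¬ (i + 1 = i))]
    simp
  · apply List.ext_getElem (by simp)
    intro j h1 h2
    rw [List.getElem_drop, List.getElem_drop]
    simp only [List.getElem_ofFn]
    show hmove n G i hi g ⟨i + 2 + j, _⟩ = g ⟨i + 2 + j, _⟩
    simp only [hmove]
    rw [if_neg (by omega), if_neg (by omega)]

theorem hmove_prod (g : Fin n → G) (i : ℕ) (hi : i + 1 < n) :
    (List.ofFn (hmove n G i hi g)).prod = (List.ofFn g).prod := by
  rw [ofFn_hmove_eq g i hi]
  conv_rhs => rw [ofFn_eq_PQ g i hi]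
  simp only [List.prod_append, List.prod_cons]
  congr 1
  group

end HmoveLemmas

variable {n : ℕ}

/-- the measure: total length of the tuple -/
def msr (t : Fin n → UCox n) : ℕ := ((List.ofFn t).map wl).sum

theorem msr_hmove (g : Fin n → UCox n) (i : ℕ) (hi : i + 1 < n) :
    msr (hmove n (UCox n) i hi g) + wl (g ⟨i+1, hi⟩) =
      msr g + wl (g ⟨i, by omega⟩ * g ⟨i+1, hi⟩ * (g ⟨i, by omega⟩)⁻¹) := by
  unfold msr
  rw [ofFn_hmove_eq g i hi]
  conv_rhs => rw [ofFn_eq_PQ g i hi]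
  simp only [List.map_append, List.map_cons, List.sum_append, List.sum_cons]
  omega

/-- the abelianization homomorphism -/
def αhom : UCox n →* Multiplicative (Fin n → ZMod 2) :=
  PresentedGroup.toGroup (f := fun i => Multiplicative.ofAdd (Pi.single i 1)) (by
    rintro r ⟨i, rfl⟩
    have h0 : (Pi.single i (1 : ZMod 2) : Fin n → ZMod 2) + Pi.single i 1 = 0 := by
      funext k
      exact CharTwo.add_self_eq_zero _
    simp only [map_mul, FreeGroup.lift_apply_of]
    rw [← ofAdd_add, h0, ofAdd_zero])

@[simp] theorem αhom_sgen (i : Fin n) : αhom (sgen i) = Multiplicative.ofAdd (Pi.single i 1) :=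
  PresentedGroup.toGroup.of _

theorem αhom_refl {w : UCox n} {i : Fin n} :
    αhom (w * sgen i * w⁻¹) = Multiplicative.ofAdd (Pi.single i 1) := by
  simp only [map_mul, map_inv]
  rw [mul_comm (αhom w), mul_assoc, mul_inv_cancel, mul_one, αhom_sgen]

theorem αhom_coxElt :
    αhom (coxElt n) = Multiplicative.ofAdd ((fun _ => 1 : Fin n → ZMod 2)) := by
  unfold coxElt
  rw [MonoidHom.map_list_prod, List.map_ofFn, List.prod_ofFn]
  have h1 : ∀ i : Fin n, (⇑αhom ∘ fun i => sgen i) i = Multiplicative.ofAdd (Pi.single i 1) :=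
    fun i => αhom_sgen i
  rw [Finset.prod_congr rfl (fun i _ => h1 i), ← ofAdd_sum]
  congr 1
  exact Finset.univ_sum_single (fun _ => (1 : ZMod 2))

theorem redT_entries_ne {t : Fin n → UCox n} (ht : t ∈ RedT n) {j k : Fin n}
    (hjk : j ≠ k) : t j ≠ t k := by
  have hch : ∀ j : Fin n, ∃ i : Fin n, αhom (t j) = Multiplicative.ofAdd (Pi.single i 1) := by
    intro j
    obtain ⟨w, i, hw⟩ := ht.1 j
    exact ⟨i, by rw [hw, αhom_refl]⟩
  choose μ hμ using hch
  have hc : (∑ j : Fin n, Pi.single (μ j) (1 : ZMod 2)) = (fun _ => 1 : Fin n → ZMod 2) := by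
    have h1 : αhom ((List.ofFn t).prod) = αhom (coxElt n) := by rw [ht.2]
    rw [αhom_coxElt, MonoidHom.map_list_prod, List.map_ofFn, List.prod_ofFn] at h1
    have h2 : (∏ j : Fin n, αhom (t j)) = Multiplicative.ofAdd (∑ j : Fin n, Pi.single (μ j) (1 : ZMod 2)) := by
      rw [Finset.prod_congr rfl fun j _ => hμ j, ← ofAdd_sum]
    rw [show (∏ j : Fin n, (αhom ∘ t) j) = ∏ j : Fin n, αhom (t j) from rfl, h2] at h1
    exact Multiplicative.ofAdd.injective h1
  have hsurj : Function.Surjective μ := by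
    intro k
    by_contra hcon
    push_neg at hcon
    have h3 := congrFun hc k
    rw [Finset.sum_apply] at h3
    have h4 : ∀ j : Fin n, (Pi.single (μ j) (1 : ZMod 2) : Fin n → ZMod 2) k = 0 := by
      intro j
      rw [Pi.single_apply, if_neg]
      intro he
      exact hcon j (by rw [he])
    rw [Finset.sum_congr rfl (fun j _ => h4 j)] at h3
    simp at h3
  have hinj : Function.Injective μ := Finite.injective_iff_surjective.2 hsurj
  intro he
  apply hjk
  apply hinj
  have h5 := (hμ j).symm.trans (he ▸ hμ k)
  have h6 := Multiplicative.ofAdd.injective h5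
  have h7 := congrFun h6 (μ j)
  rw [Pi.single_apply, Pi.single_apply, if_pos rfl] at h7
  by_contra hne
  rw [if_neg hne] at h7
  exact absurd h7 (by decide)

end UCoxNF

namespace UCoxNF

variable {n : ℕ}

theorem conj_mul_aux (P S W : UCox n) (h : S * S = 1) :
    (P * S * P⁻¹) * (P * S * W) = P * W := by
  have h1 : (P * S * P⁻¹) * (P * S * W) = P * (S * S) * W := by group
  rw [h1, h, mul_one]

theorem conj_shrink {τ τ' : UCox n} (hτ : τ ∈ Refl n) (hτ' : τ' ∈ Refl n)
    (hD : Dof τ < Dof τ') (hl : Dof τ + 1 ≤ lcp (nf τ) (nf τ')) :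
    wl (τ * τ' * τ⁻¹) < wl τ' := by
  have hlena : (nf τ).length = 2 * Dof τ + 1 := refl_len hτ
  have hlena' : (nf τ').length = 2 * Dof τ' + 1 := refl_len hτ'
  have hyp : Dof τ < (nf τ).length := by omega
  -- common prefix of length Dof τ + 1
  have htk : (nf τ').take (Dof τ + 1) = (nf τ).take (Dof τ + 1) := by
    have h0 : (nf τ).take (lcp (nf τ) (nf τ')) = (nf τ').take (lcp (nf τ) (nf τ')) :=
      take_lcp _ _
    have h1 : (nf τ).take (Dof τ + 1) = ((nf τ).take (lcp (nf τ) (nf τ'))).take (Dof τ + 1) := by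
      rw [List.take_take, min_eq_left hl]
    rw [h1, h0, List.take_take, min_eq_left hl]
  -- decompose U' = E ++ W0
  set U' := (nf τ').take (Dof τ') with hU'def
  have hU' : U' = (nf τ).take (Dof τ + 1) ++ U'.drop (Dof τ + 1) := by
    conv_lhs => rw [← List.take_append_drop (Dof τ + 1) U']
    congr 1
    rw [hU'def, List.take_take, min_eq_left (by omega)]
    exact htk
  have htk1 : (nf τ).take (Dof τ + 1) = (nf τ).take (Dof τ) ++ [(nf τ)[Dof τ]'hyp] := by
    rw [List.take_succ, List.getElem?_eq_getElem hyp]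
    rfl
  -- τ * eval U' = eval (take D ++ W0)
  have hg : τ * eval U' = eval ((nf τ).take (Dof τ) ++ U'.drop (Dof τ + 1)) := by
    conv_lhs => rw [hU', eval_append, htk1, eval_append]
    nth_rewrite 1 [refl_eq_conj hτ]
    rw [eval_append]
    have hsq : sgen ((nf τ)[Dof τ]'hyp) * sgen ((nf τ)[Dof τ]'hyp) = 1 := sgen_mul_self _
    have he1 : eval [(nf τ)[Dof τ]'hyp] = sgen ((nf τ)[Dof τ]'hyp) := by simp
    rw [he1]
    exact conj_mul_aux _ _ _ hsq
  -- conjugate form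
  have hyp' : Dof τ' < (nf τ').length := by omega
  have hc : τ * τ' * τ⁻¹ =
      (τ * eval U') * sgen ((nf τ')[Dof τ']'hyp') * (τ * eval U')⁻¹ := by
    conv_lhs => rw [refl_eq_conj hτ']
    rw [← hU'def]
    group
  rw [hc, hg]
  have h2 := wl_conj_le (eval ((nf τ).take (Dof τ) ++ U'.drop (Dof τ + 1))) ((nf τ')[Dof τ']'hyp')
  have h3 := wl_eval_le ((nf τ).take (Dof τ) ++ U'.drop (Dof τ + 1))
  have h4 : ((nf τ).take (Dof τ) ++ U'.drop (Dof τ + 1)).length ≤ Dof τ' - 1 := by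
    rw [List.length_append, List.length_take, List.length_drop, hU'def, List.length_take]
    have : Dof τ ⊓ (nf τ).length = Dof τ := by omega
    rw [this]
    omega
  have h5 : wl τ' = 2 * Dof τ' + 1 := hlena'
  omega

theorem refl_unique {τ τ' : UCox n} (hτ : τ ∈ Refl n) (hτ' : τ' ∈ Refl n)
    (hDe : Dof τ = Dof τ')
    (htk : (nf τ).take (Dof τ + 1) = (nf τ').take (Dof τ + 1)) : τ = τ' := by
  have hlena : (nf τ).length = 2 * Dof τ + 1 := refl_len hτ
  have hlena' : (nf τ').length = 2 * Dof τ' + 1 := refl_len hτ'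
  have hyp : Dof τ < (nf τ).length := by omega
  have hyp' : Dof τ' < (nf τ').length := by omega
  have hU : (nf τ).take (Dof τ) = (nf τ').take (Dof τ') := by
    have h1 : (nf τ).take (Dof τ) = ((nf τ).take (Dof τ + 1)).take (Dof τ) := by
      rw [List.take_take, min_eq_left (by omega)]
    rw [h1, htk, List.take_take, min_eq_left (by omega), hDe]
  have hy : (nf τ)[Dof τ]'hyp = (nf τ')[Dof τ']'hyp' := by
    have h1 : (nf τ)[Dof τ]'hyp = ((nf τ).take (Dof τ + 1))[Dof τ]'(by
        rw [List.length_take]; omega) := by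
      rw [List.getElem_take]
    rw [h1]
    have h2 : ((nf τ).take (Dof τ + 1))[Dof τ]'(by rw [List.length_take]; omega) =
        ((nf τ').take (Dof τ + 1))[Dof τ]'(by rw [List.length_take]; omega) :=
      List.getElem_of_eq htk _
    rw [h2, List.getElem_take]
    have h3 : ∀ (i j : ℕ) (hi : i < (nf τ').length) (hj : j < (nf τ').length), i = j →
        (nf τ')[i]'hi = (nf τ')[j]'hj := by
      intro i j hi hj h
      subst h
      rfl
    exact h3 _ _ _ _ hDe
  rw [refl_eq_conj hτ, refl_eq_conj hτ', hU, hy]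

theorem red_finRange : Red (List.finRange n) := List.Pairwise.isChain (List.nodup_finRange n)

theorem coxElt_eval : coxElt n = eval (List.finRange n) := by
  unfold coxElt eval
  rw [List.ofFn_eq_map]

theorem nf_coxElt : nf (coxElt n) = List.finRange n := by
  rw [coxElt_eval, nf_eval _ red_finRange]

theorem wl_coxElt : wl (coxElt n) = n := by
  rw [wl, nf_coxElt, List.length_finRange]

end UCoxNF

namespace UCoxNF

variable {n : ℕ}

theorem reach : ∀ (N : ℕ) (t : Fin n → UCox n), t ∈ RedT n → msr t = N →
    Relation.EqvGen (hstep n (UCox n)) t (fun j => sgen j) := by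
  intro N
  induction N using Nat.strong_induction_on with
  | _ N ih =>
  intro t ht hN
  by_cases hex : ∃ i, ∃ hi : i + 1 < n,
      min (wl (t ⟨i, by omega⟩)) (wl (t ⟨i+1, hi⟩)) <
        2 * lcp (nf (t ⟨i, by omega⟩)) (nf (t ⟨i+1, hi⟩))
  · obtain ⟨i, hi, hlt⟩ := hex
    have hii : i < n := by omega
    set j1 : Fin n := ⟨i, hii⟩ with hj1
    set j2 : Fin n := ⟨i+1, hi⟩ with hj2
    have hne12 : j1 ≠ j2 := by
      intro h
      have := congrArg Fin.val h
      simp [hj1, hj2] at this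
    have hτ : t j1 ∈ Refl n := ht.1 j1
    have hτ' : t j2 ∈ Refl n := ht.1 j2
    have hw1 : wl (t j1) = 2 * Dof (t j1) + 1 := refl_len hτ
    have hw2 : wl (t j2) = 2 * Dof (t j2) + 1 := refl_len hτ'
    have hlt' : min (wl (t j1)) (wl (t j2)) < 2 * lcp (nf (t j1)) (nf (t j2)) := hlt
    rcases lt_trichotomy (Dof (t j1)) (Dof (t j2)) with hD | hD | hD
    · -- forward move decreases the measure
      have hl : Dof (t j1) + 1 ≤ lcp (nf (t j1)) (nf (t j2)) := by
        rw [hw1, hw2] at hlt'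
        omega
      have hshr := conj_shrink hτ hτ' hD hl
      set t2 := hmove n (UCox n) i hi t with ht2
      have hstep1 : hstep n (UCox n) t t2 := ⟨i, hi, rfl⟩
      have hredT2 : t2 ∈ RedT n := by
        constructor
        · intro j
          rw [ht2]
          show (if (j:ℕ) = i then _ else if (j:ℕ) = i+1 then _ else t j) ∈ Refl n
          split_ifs with h1 h2
          · exact refl_conj hτ'
          · exact hτ
          · exact ht.1 j
        · rw [ht2, hmove_prod t i hi]
          exact ht.2
      have hms : msr t2 + wl (t j2) = msr t + wl (t j1 * t j2 * (t j1)⁻¹) :=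
        msr_hmove t i hi
      have hlt2 : msr t2 < msr t := by omega
      have hrest := ih (msr t2) (by omega) t2 hredT2 rfl
      exact Relation.EqvGen.trans _ _ _ (Relation.EqvGen.rel _ _ hstep1) hrest
    · -- equal half-lengths : contradiction
      exfalso
      apply redT_entries_ne ht hne12
      have hl : Dof (t j1) + 1 ≤ lcp (nf (t j1)) (nf (t j2)) := by
        rw [hw1, hw2, ← hD] at hlt'
        omega
      apply refl_unique hτ hτ' hD
      have h0 : (nf (t j1)).take (lcp (nf (t j1)) (nf (t j2))) =
          (nf (t j2)).take (lcp (nf (t j1)) (nf (t j2))) := take_lcp _ _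
      have h1 : (nf (t j1)).take (Dof (t j1) + 1) =
          ((nf (t j1)).take (lcp (nf (t j1)) (nf (t j2)))).take (Dof (t j1) + 1) := by
        rw [List.take_take, min_eq_left hl]
      rw [h1, h0, List.take_take, min_eq_left hl]
    · -- backward move decreases the measure
      have hl : Dof (t j2) + 1 ≤ lcp (nf (t j2)) (nf (t j1)) := by
        rw [lcp_comm]
        rw [hw1, hw2] at hlt'
        omega
      have hshr := conj_shrink hτ' hτ hD hl
      set t2 := Function.update (Function.update t j1 (t j2)) j2 (t j2 * t j1 * (t j2)⁻¹)
        with ht2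
      have h21 : t2 j1 = t j2 := by
        rw [ht2, Function.update_of_ne hne12, Function.update_self]
      have h22 : t2 j2 = t j2 * t j1 * (t j2)⁻¹ := by
        rw [ht2, Function.update_self]
      have h2o : ∀ j, j ≠ j1 → j ≠ j2 → t2 j = t j := by
        intro j hja hjb
        rw [ht2, Function.update_of_ne hjb, Function.update_of_ne hja]
      have hback : t2 j1 * t2 j2 * (t2 j1)⁻¹ = t j1 := by
        rw [h21, h22]
        have hsq : t j2 * t j2 = 1 := by
          nth_rewrite 1 [← refl_inv hτ']
          exact inv_mul_cancel _
        have h5 : t j2 * (t j2 * t j1 * (t j2)⁻¹) * (t j2)⁻¹ =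
            (t j2 * t j2) * t j1 * ((t j2 * t j2))⁻¹ := by group
        rw [h5, hsq]
        simp
      have hmt : hmove n (UCox n) i hi t2 = t := by
        funext j
        show (if (j:ℕ) = i then t2 ⟨i, hii⟩ * t2 ⟨i+1, hi⟩ * (t2 ⟨i, hii⟩)⁻¹
          else if (j:ℕ) = i+1 then t2 ⟨i, hii⟩ else t2 j) = t j
        split_ifs with h1 h2
        · have hj : j = j1 := Fin.ext h1
          rw [hj]
          exact hback
        · have hj : j = j2 := Fin.ext h2
          rw [hj]
          exact h21
        · have hja : j ≠ j1 := fun he => h1 (by rw [he])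
          have hjb : j ≠ j2 := fun he => h2 (by rw [he])
          exact h2o j hja hjb
      have hstep1 : hstep n (UCox n) t2 t := ⟨i, hi, hmt.symm⟩
      have hredT2 : t2 ∈ RedT n := by
        constructor
        · intro j
          by_cases hja : j = j1
          · rw [hja, h21]; exact hτ'
          by_cases hjb : j = j2
          · rw [hjb, h22]; exact refl_conj hτ
          · rw [h2o j hja hjb]; exact ht.1 j
        · have := hmove_prod t2 i hi
          rw [hmt] at this
          rw [← this]
          exact ht.2
      have hms : msr (hmove n (UCox n) i hi t2) + wl (t2 j2) =
          msr t2 + wl (t2 j1 * t2 j2 * (t2 j1)⁻¹) := msr_hmove t2 i hi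
      rw [hmt, hback, h22] at hms
      have hlt2 : msr t2 < msr t := by omega
      have hrest := ih (msr t2) (by omega) t2 hredT2 rfl
      exact Relation.EqvGen.trans _ _ _
        (Relation.EqvGen.symm _ _ (Relation.EqvGen.rel _ _ hstep1)) hrest
  · -- no decreasing pair : the tuple is the base tuple
    push_neg at hex
    rcases Nat.eq_zero_or_pos n with hn | hn
    · subst hn
      have hbase : t = fun j => sgen j := funext fun j => j.elim0
      rw [hbase]
      exact Relation.EqvGen.refl _
    obtain ⟨m, rfl⟩ : ∃ m, n = m + 1 := ⟨n - 1, by omega⟩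
    have hstrict : ∀ (i : ℕ) (hi2 : i + 1 < m + 1),
        2 * lcp (nf (t ⟨i, by omega⟩)) (nf (t ⟨i+1, hi2⟩)) <
          min (wl (t ⟨i, by omega⟩)) (wl (t ⟨i+1, hi2⟩)) := by
      intro i hi2
      have hb := hex i hi2
      have ho1 : wl (t ⟨i, by omega⟩) = 2 * Dof (t ⟨i, by omega⟩) + 1 := refl_len (ht.1 _)
      have ho2 : wl (t ⟨i+1, hi2⟩) = 2 * Dof (t ⟨i+1, hi2⟩) + 1 := refl_len (ht.1 _)
      omega
    have hchain : List.Chain' (fun x y => 2 * lcp (nf x) (nf y) < min (wl x) (wl y))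
        (List.ofFn t) := by
      simp only [List.Chain']
      rw [List.isChain_iff_getElem]
      intro i hlen
      rw [List.getElem_ofFn, List.getElem_ofFn]
      have hi2 : i + 1 < m + 1 := by
        simp only [List.length_ofFn] at hlen
        omega
      exact hstrict i hi2
    have hofn : List.ofFn t = t 0 :: List.ofFn (fun i : Fin m => t i.succ) := List.ofFn_succ (f := t)
    have hrefl : ∀ x ∈ t 0 :: List.ofFn (fun i : Fin m => t i.succ), x ∈ Refl (m+1) := by
      intro x hx
      rw [← hofn, List.mem_ofFn] at hx
      obtain ⟨j, rfl⟩ := hx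
      exact ht.1 j
    have hchain2 : List.Chain' (fun x y => 2 * lcp (nf x) (nf y) < min (wl x) (wl y))
        (t 0 :: List.ofFn (fun i : Fin m => t i.succ)) := by rw [← hofn]; exact hchain
    obtain ⟨hlen, _⟩ := core (List.ofFn fun i : Fin m => t i.succ) (t 0) hrefl hchain2
    have hprod : (t 0 :: List.ofFn fun i : Fin m => t i.succ).prod = coxElt (m+1) := by
      rw [← hofn]
      exact ht.2
    rw [hprod, wl_coxElt] at hlen
    have hlsz : (t 0 :: List.ofFn fun i : Fin m => t i.succ).length = m + 1 := by simp
    rw [hlsz] at hlen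
    have hmax0 : maxD (t 0 :: List.ofFn fun i : Fin m => t i.succ) = 0 := by omega
    have hDj : ∀ j, Dof (t j) = 0 := by
      intro j
      have hmem : t j ∈ t 0 :: List.ofFn fun i : Fin m => t i.succ := by
        rw [← hofn, List.mem_ofFn]
        exact ⟨j, rfl⟩
      have := le_maxD hmem
      omega
    have hnf1 : ∀ j, (nf (t j)).length = 1 := by
      intro j
      rw [refl_len (ht.1 j), hDj j]
    set y : Fin (m+1) → Fin (m+1) := fun j => (nf (t j)).head! with hy
    have hnfj : ∀ j, nf (t j) = [y j] := by
      intro j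
      obtain ⟨a, ha⟩ := List.length_eq_one_iff.1 (hnf1 j)
      rw [hy]
      simp only
      rw [ha]
      rfl
    have htj : ∀ j, t j = sgen (y j) := by
      intro j
      conv_lhs => rw [← eval_nf (t j), hnfj j]
      simp
    have hys_red : Red (List.ofFn y) := by
      simp only [Red, List.Chain']
      rw [List.isChain_iff_getElem]
      intro i hlen2
      rw [List.getElem_ofFn, List.getElem_ofFn]
      simp only [List.length_ofFn] at hlen2
      have hi2 : i + 1 < m + 1 := by omega
      have hb := hstrict i hi2
      rw [hnfj, hnfj] at hb
      intro heq
      have hcast1 : (Fin.cast (by simp) (⟨i, by omega⟩ : Fin (List.ofFn y).length)) =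
          (⟨i, by omega⟩ : Fin (m+1)) := rfl
      have hlcp1 : lcp [y ⟨i, by omega⟩] [y ⟨i+1, hi2⟩] = 1 := by
        rw [lcp_cons_cons, if_pos ?_]
        · rfl
        · exact heq
      rw [hlcp1] at hb
      have hw1' : wl (t ⟨i, by omega⟩) = 1 := hnf1 _
      have hw2' : wl (t ⟨i+1, hi2⟩) = 1 := hnf1 _
      rw [hw1', hw2'] at hb
      omega
    have hevys : eval (List.ofFn y) = coxElt (m+1) := by
      unfold eval
      rw [List.map_ofFn]
      have : List.ofFn (sgen ∘ y) = List.ofFn t := by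
        rw [List.ofFn_inj]
        funext j
        exact (htj j).symm
      rw [this]
      exact ht.2
    have hysval : List.ofFn y = List.finRange (m+1) := by
      rw [← nf_eval (List.ofFn y) hys_red, hevys, nf_coxElt]
    have hyid : y = id := by
      rw [show List.finRange (m+1) = List.ofFn id from rfl] at hysval
      exact List.ofFn_inj.1 hysval
    have hbase : t = fun j => sgen j := by
      funext j
      rw [htj j, hyid]
      rfl
    rw [hbase]
    exact Relation.EqvGen.refl _

end UCoxNF


/-- The Hurwitz action of `B_n` is transitive on `Red_T(c)`. -/
theorem hurwitz_transitive_RedT (n : ℕ) :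
    ∀ a ∈ RedT n, ∀ b ∈ RedT n, Relation.EqvGen (hstep n (UCox n)) a b := by
  intro a ha b hb
  exact Relation.EqvGen.trans _ _ _ (UCoxNF.reach (UCoxNF.msr a) a ha rfl)
    (Relation.EqvGen.symm _ _ (UCoxNF.reach (UCoxNF.msr b) b hb rfl))
end

section
/- (Artin) The Hurwitz action of the braid group B_n is transitive on the set Red_R(g) of n-tuples (r_1,…,r_n) of conjugates of the free generators f_1,…,f_n of the free group F_n such that r_1 r_2 ⋯ r_n = f_1 f_2 ⋯ f_n. -/
/-! ### Auxiliary development for the proof -/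

namespace HurwitzProofAux

open FreeGroup List

variable {α : Type*} [DecidableEq α]
set_option linter.unusedSectionVars false
set_option maxHeartbeats 1000000


open FreeGroup List

variable {α : Type*} [DecidableEq α]
set_option linter.unusedSectionVars false

/-- Non-cancelling adjacency of letters. -/
def RR (p q : α × Bool) : Prop := ¬(p.1 = q.1 ∧ p.2 = !q.2)

/-- A word is reduced. -/
def Reduced (w : List (α × Bool)) : Prop := w.Chain' RR

lemma Reduced.nil : Reduced ([] : List (α × Bool)) := List.isChain_nil

lemma reduce_eq_self {w : List (α × Bool)} (h : Reduced w) : FreeGroup.reduce w = w := by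
  induction w with
  | nil => rfl
  | cons x xs ih =>
    have hxs : Reduced xs := (List.isChain_cons.1 h).2
    rw [FreeGroup.reduce.cons, ih hxs]
    cases xs with
    | nil => rfl
    | cons hd tl =>
      have hR : RR x hd := (List.isChain_cons_cons.1 h).1
      simp only [RR] at hR
      show (if x.1 = hd.1 ∧ x.2 = !hd.2 then tl else x :: hd :: tl) = x :: hd :: tl
      rw [if_neg hR]

lemma reduced_reduce (w : List (α × Bool)) : Reduced (FreeGroup.reduce w) := by
  induction w with
  | nil => exact List.isChain_nil
  | cons x xs ih =>
    rw [FreeGroup.reduce.cons]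
    revert ih
    cases h : FreeGroup.reduce xs with
    | nil => intro _; exact List.isChain_singleton _
    | cons hd tl =>
      intro ih
      show Reduced (if x.1 = hd.1 ∧ x.2 = !hd.2 then tl else x :: hd :: tl)
      by_cases hc : x.1 = hd.1 ∧ x.2 = !hd.2
      · rw [if_pos hc]; exact ih.tail
      · rw [if_neg hc]
        exact List.isChain_cons_cons.2 ⟨hc, ih⟩

lemma reduced_toWord (x : FreeGroup α) : Reduced x.toWord := by
  rw [← FreeGroup.reduce_toWord]; exact reduced_reduce _

lemma toWord_mk_eq {w : List (α × Bool)} (h : Reduced w) : (FreeGroup.mk w).toWord = w := by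
  rw [FreeGroup.toWord_mk, reduce_eq_self h]

lemma norm_mk_eq {w : List (α × Bool)} (h : Reduced w) : (FreeGroup.mk w).norm = w.length := by
  rw [FreeGroup.norm, toWord_mk_eq h]

lemma mk_eq_mk_of_reduced {w w' : List (α × Bool)} (hw : Reduced w) (hw' : Reduced w')
    (h : FreeGroup.mk w = FreeGroup.mk w') : w = w' := by
  have := congrArg FreeGroup.toWord h
  rwa [toWord_mk_eq hw, toWord_mk_eq hw'] at this

/-- flip a letter -/
def fl (p : α × Bool) : α × Bool := (p.1, !p.2)

lemma invRev_eq_map (w : List (α × Bool)) : FreeGroup.invRev w = (w.map fl).reverse := rfl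

lemma mem_invRev {w : List (α × Bool)} {p : α × Bool} :
    p ∈ FreeGroup.invRev w ↔ fl p ∈ w := by
  simp only [invRev_eq_map, List.mem_reverse, List.mem_map]
  constructor
  · rintro ⟨q, hq, rfl⟩
    simpa [fl] using hq
  · intro h
    exact ⟨fl p, h, by simp [fl]⟩

lemma RR_fl_fl {p q : α × Bool} (h : RR p q) : RR (fl q) (fl p) := by
  simp only [RR, fl] at *
  rintro ⟨h1, h2⟩
  exact h ⟨h1.symm, by simpa using h2.symm⟩

lemma reduced_invRev {w : List (α × Bool)} (h : Reduced w) : Reduced (FreeGroup.invRev w) := by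
  rw [invRev_eq_map, Reduced, List.Chain', List.isChain_reverse, List.isChain_map]
  exact h.imp fun a b hab => RR_fl_fl hab

lemma head?_invRev (w : List (α × Bool)) :
    (FreeGroup.invRev w).head? = w.getLast?.map fl := by
  rw [invRev_eq_map, List.head?_reverse, List.getLast?_map]

lemma getLast?_invRev (w : List (α × Bool)) :
    (FreeGroup.invRev w).getLast? = w.head?.map fl := by
  rw [invRev_eq_map, List.getLast?_reverse, List.head?_map]

lemma invRev_append (w₁ w₂ : List (α × Bool)) :
    FreeGroup.invRev (w₁ ++ w₂) = FreeGroup.invRev w₂ ++ FreeGroup.invRev w₁ := by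
  simp [invRev_eq_map]


open FreeGroup List
variable {α : Type*} [DecidableEq α]
set_option linter.unusedSectionVars false

/-- canonical word of a reflection -/
def cword (v : List (α × Bool)) (a : α) : List (α × Bool) := v ++ (a, true) :: FreeGroup.invRev v

def Canon (v : List (α × Bool)) (a : α) : Prop :=
  Reduced v ∧ ∀ p ∈ v.getLast?, p.1 ≠ a

lemma mk_cword (v : List (α × Bool)) (a : α) :
    FreeGroup.mk (cword v a) = FreeGroup.mk v * FreeGroup.of a * (FreeGroup.mk v)⁻¹ := by
  rw [FreeGroup.of, FreeGroup.mul_mk, FreeGroup.inv_mk, FreeGroup.mul_mk, cword]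
  simp

lemma head?_invRev' (w : List (α × Bool)) :
    (FreeGroup.invRev w).head? = w.getLast?.map (fun p => (p.1, !p.2)) := by
  rw [FreeGroup.invRev, List.head?_reverse, List.getLast?_map]

lemma reduced_invRev' {w : List (α × Bool)} (h : Reduced w) : Reduced (FreeGroup.invRev w) := by
  rw [FreeGroup.invRev, Reduced, List.Chain', List.isChain_reverse, List.isChain_map]
  refine h.imp fun p q hpq => ?_
  rintro ⟨h1, h2⟩
  exact hpq ⟨h1.symm, by simpa using h2.symm⟩

lemma cword_reduced {v : List (α × Bool)} {a : α} (h : Canon v a) : Reduced (cword v a) := by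
  obtain ⟨hv, hl⟩ := h
  refine List.IsChain.append hv ?_ ?_
  · refine List.isChain_cons.2 ⟨?_, reduced_invRev' hv⟩
    intro y hy
    rw [head?_invRev'] at hy
    simp only [Option.mem_def, Option.map_eq_some_iff] at hy
    obtain ⟨p, hp, rfl⟩ := hy
    rintro ⟨h1, -⟩
    exact hl p hp h1.symm
  · intro x hx y hy
    simp only [List.head?_cons, Option.mem_def, Option.some.injEq] at hy
    subst hy
    rintro ⟨h1, -⟩
    exact hl x hx h1

lemma cword_length (v : List (α × Bool)) (a : α) : (cword v a).length = 2 * v.length + 1 := by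
  simp [cword, FreeGroup.invRev]; omega

/-- longest common prefix length -/
def lcpLen : List (α × Bool) → List (α × Bool) → ℕ
  | x :: xs, y :: ys => if x = y then lcpLen xs ys + 1 else 0
  | _, _ => 0

lemma lcpLen_le_left : ∀ (xs ys : List (α × Bool)), lcpLen xs ys ≤ xs.length := by
  intro xs
  induction xs with
  | nil => intro ys; cases ys <;> simp [lcpLen]
  | cons x xs ih =>
    intro ys
    cases ys with
    | nil => simp [lcpLen]
    | cons y ys =>
      by_cases h : x = y
      · simp only [lcpLen, if_pos h, List.length_cons]
        exact Nat.succ_le_succ (ih ys)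
      · simp [lcpLen, if_neg h]

lemma lcpLen_comm : ∀ (xs ys : List (α × Bool)), lcpLen xs ys = lcpLen ys xs := by
  intro xs
  induction xs with
  | nil => intro ys; cases ys <;> simp [lcpLen]
  | cons x xs ih =>
    intro ys
    cases ys with
    | nil => simp [lcpLen]
    | cons y ys =>
      by_cases h : x = y
      · subst h; simp [lcpLen, ih]
      · rw [lcpLen, lcpLen, if_neg h, if_neg (fun hh : y = x => h hh.symm)]

lemma take_lcpLen_eq : ∀ (xs ys : List (α × Bool)),
    xs.take (lcpLen xs ys) = ys.take (lcpLen xs ys) := by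
  intro xs
  induction xs with
  | nil => intro ys; cases ys <;> simp [lcpLen]
  | cons x xs ih =>
    intro ys
    cases ys with
    | nil => simp [lcpLen]
    | cons y ys =>
      by_cases h : x = y
      · subst h
        rw [lcpLen, if_pos rfl, List.take_succ_cons, List.take_succ_cons, ih]
      · simp [lcpLen, if_neg h]

lemma head_drop_lcpLen_ne : ∀ (xs ys : List (α × Bool)),
    (xs.drop (lcpLen xs ys)).head? = (ys.drop (lcpLen xs ys)).head? →
    (xs.drop (lcpLen xs ys) = [] ∨ ys.drop (lcpLen xs ys) = []) := by
  intro xs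
  induction xs with
  | nil => intro ys _; left; simp
  | cons x xs ih =>
    intro ys
    cases ys with
    | nil => intro _; right; simp
    | cons y ys =>
      by_cases h : x = y
      · subst h; simp only [lcpLen, if_pos rfl, List.drop_succ_cons]; exact ih ys
      · intro hh
        simp only [lcpLen, if_neg h, List.drop_zero, List.head?_cons, Option.some.injEq] at hh
        exact absurd hh h


lemma mk_single_false (a : α) : FreeGroup.mk [(a, false)] = (FreeGroup.of a)⁻¹ := by
  rw [FreeGroup.of, FreeGroup.inv_mk]; rfl

lemma exists_canon_aux : ∀ (N : ℕ) (w : FreeGroup α) (i : α), w.toWord.length ≤ N →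
    ∃ v, Canon v i ∧ w * FreeGroup.of i * w⁻¹ = FreeGroup.mk (cword v i) := by
  intro N
  induction N with
  | zero =>
    intro w i hw
    have hnil : w.toWord = [] := List.length_eq_zero_iff.1 (Nat.le_zero.1 hw)
    have hw1 : w = 1 := FreeGroup.toWord_eq_nil_iff.1 hnil
    subst hw1
    refine ⟨[], ⟨List.isChain_nil, by simp⟩, ?_⟩
    rw [mk_cword]
    rw [show FreeGroup.mk ([] : List (α × Bool)) = 1 from rfl]
  | succ N ih =>
    intro w i hw
    by_cases hl : ∀ p ∈ w.toWord.getLast?, p.1 ≠ i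
    · refine ⟨w.toWord, ⟨reduced_toWord w, hl⟩, ?_⟩
      rw [mk_cword, FreeGroup.mk_toWord]
    · push_neg at hl
      obtain ⟨p, hp, hpi⟩ := hl
      -- w.toWord ends with (i, p.2)
      have hne : w.toWord ≠ [] := by
        intro h; rw [h] at hp; simp at hp
      have hsplit : w.toWord = w.toWord.dropLast ++ [p] := by
        have h2 := List.dropLast_append_getLast hne
        rw [List.getLast?_eq_getLast hne] at hp
        simp only [Option.mem_def, Option.some.injEq] at hp
        rw [hp] at h2
        exact h2.symm
      set l' := w.toWord.dropLast with hl'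
      have hred' : Reduced l' := by
        have : Reduced w.toWord := reduced_toWord w
        exact this.prefix (List.dropLast_prefix _)
      have hwmk : w = FreeGroup.mk l' * FreeGroup.mk [p] := by
        conv_lhs => rw [← FreeGroup.mk_toWord (x := w)]
        rw [hsplit, ← FreeGroup.mul_mk]
      have hkey : w * FreeGroup.of i * w⁻¹ =
          FreeGroup.mk l' * FreeGroup.of i * (FreeGroup.mk l')⁻¹ := by
        rw [hwmk]
        have hcomm : FreeGroup.mk [p] * FreeGroup.of i * (FreeGroup.mk [p])⁻¹ =
            FreeGroup.of i := by
          obtain ⟨p1, p2⟩ := p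
          simp only at hpi
          rw [hpi]
          cases p2
          · rw [mk_single_false]; group
          · rw [show FreeGroup.mk [(i, true)] = FreeGroup.of i from rfl]; group
        calc FreeGroup.mk l' * FreeGroup.mk [p] * FreeGroup.of i *
              (FreeGroup.mk l' * FreeGroup.mk [p])⁻¹
            = FreeGroup.mk l' * (FreeGroup.mk [p] * FreeGroup.of i * (FreeGroup.mk [p])⁻¹) *
              (FreeGroup.mk l')⁻¹ := by group
          _ = _ := by rw [hcomm]
      have hlen : (FreeGroup.mk l').toWord.length ≤ N := by
        rw [toWord_mk_eq hred']
        have : w.toWord.length = l'.length + 1 := by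
          rw [hsplit]; simp
        omega
      obtain ⟨v, hv, heq⟩ := ih (FreeGroup.mk l') i hlen
      exact ⟨v, hv, by rw [hkey, heq]⟩

lemma exists_canon (w : FreeGroup α) (i : α) :
    ∃ v, Canon v i ∧ w * FreeGroup.of i * w⁻¹ = FreeGroup.mk (cword v i) :=
  exists_canon_aux w.toWord.length w i le_rfl


open FreeGroup List
variable {α : Type*} [DecidableEq α]
set_option linter.unusedSectionVars false
set_option maxHeartbeats 1000000

def ND (p q : (List (α × Bool)) × α) : Prop :=
  ¬(p.1 ++ [(p.2, false)] <+: q.1) ∧ ¬(q.1 ++ [(q.2, true)] <+: p.1)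

def elt (q : (List (α × Bool)) × α) : FreeGroup α := FreeGroup.mk (cword q.1 q.2)

def bstep (C v : List (α × Bool)) (q : (List (α × Bool)) × α) : List (α × Bool) :=
  C ++ FreeGroup.invRev (v.drop (lcpLen v q.1)) ++ q.1.drop (lcpLen v q.1) ++ [(q.2, true)]

def build : List (α × Bool) → List (α × Bool) → List ((List (α × Bool)) × α) →
    (List (α × Bool)) × (List (α × Bool))
  | C, v, [] => (C, v)
  | C, v, q :: l => build (bstep C v q) q.1 l

@[simp] lemma build_nil (C v : List (α × Bool)) : build C v [] = (C, v) := rfl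
@[simp] lemma build_cons (C v : List (α × Bool)) (q) (l) :
    build C v (q :: l) = build (bstep C v q) q.1 l := rfl

theorem build_spec : ∀ (l : List ((List (α × Bool)) × α)) (C v : List (α × Bool)) (a : α),
    Reduced C → C.getLast? = some (a, true) → Canon v a →
    (∀ q ∈ l, Canon q.1 q.2) → List.Chain ND (v, a) l →
    Reduced (build C v l).1 ∧
    (∃ af, (build C v l).1.getLast? = some (af, true) ∧ Canon (build C v l).2 af) ∧
    C <+: (build C v l).1 ∧
    FreeGroup.mk (C ++ FreeGroup.invRev v) * (l.map elt).prod =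
      FreeGroup.mk ((build C v l).1 ++ FreeGroup.invRev (build C v l).2) ∧
    ((∀ p ∈ (build C v l).1, p.2 = true) → (∀ p ∈ v, p.2 = true) →
      (∀ p ∈ (build C v l).2, p.2 = false) →
      (v = [] ∧ (build C v l).2 = [] ∧ (∀ q ∈ l, q.1 = []) ∧
        (build C v l).1 = C ++ l.map (fun q => (q.2, true)))) := by
  intro l
  induction l with
  | nil =>
    intro C v a hC hCl hv _ _
    refine ⟨hC, ⟨a, hCl, hv⟩, List.prefix_refl _, by simp [build], ?_⟩
    intro _ hvt hvf
    refine ⟨?_, ?_, by simp, by simp [build]⟩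
    · -- v all true and all false
      refine List.eq_nil_iff_forall_not_mem.2 (fun p hp => ?_)
      have := hvt p hp
      have := hvf p hp
      simp_all
    · refine List.eq_nil_iff_forall_not_mem.2 (fun p hp => ?_)
      have := hvt p hp
      have := hvf p hp
      simp_all
  | cons q l ih =>
    rintro C v a hC hClast ⟨hvred, hvlast⟩ hcl hchain
    obtain ⟨v', a'⟩ := q
    have hcan' : Canon v' a' := hcl _ List.mem_cons_self
    obtain ⟨hv'red, hv'last⟩ := hcan'
    have hnd : ND (v, a) (v', a') := (List.chain_cons.1 hchain).1
    have hchain' : List.Chain ND (v', a') l := (List.chain_cons.1 hchain).2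
    obtain ⟨hnd1, hnd2⟩ := hnd
    set k := lcpLen v v' with hk
    set tt := v.take k with htt
    set vh := v.drop k with hvh
    set uh := v'.drop k with huh
    have hvt : tt ++ vh = v := List.take_append_drop k v
    have htake : v.take k = v'.take k := take_lcpLen_eq v v'
    have hv't : tt ++ uh = v' := by
      rw [htt, htake]; exact List.take_append_drop k v'
    have hC' : bstep C v (v', a') = C ++ FreeGroup.invRev vh ++ uh ++ [(a', true)] := rfl
    have hred_vh : Reduced vh := hvred.suffix (List.drop_suffix _ _)
    have hred_uh : Reduced uh := hv'red.suffix (List.drop_suffix _ _)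
    have hhead_ne : vh ≠ [] → uh ≠ [] → vh.head? ≠ uh.head? := by
      intro h1 h2 he
      rcases head_drop_lcpLen_ne v v' he with h | h
      · exact h1 h
      · exact h2 h
    clear_value k tt vh uh
    -- last of vh is last of v etc.
    have hlast_vh : vh ≠ [] → vh.getLast? = v.getLast? := by
      intro h; rw [← hvt, List.getLast?_append_of_ne_nil _ h]
    have hlast_uh : uh ≠ [] → uh.getLast? = v'.getLast? := by
      intro h; rw [← hv't, List.getLast?_append_of_ne_nil _ h]
    have hvh_nil : vh = [] → v' = v ++ uh := by
      intro h
      rw [h, List.append_nil] at hvt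
      rw [← hv't, hvt]
    have huh_nil : uh = [] → v = v' ++ vh := by
      intro h
      rw [h, List.append_nil] at hv't
      rw [← hvt, hv't]
    -- Reduced (W3 = uh ++ [(a',true)])
    have hredW3 : Reduced (uh ++ [(a', true)]) := by
      refine List.IsChain.append hred_uh (List.isChain_singleton _) ?_
      intro x hx y hy
      simp only [List.head?_cons, Option.mem_def, Option.some.injEq] at hy
      subst hy
      have hxn : uh ≠ [] := by rintro rfl; simp at hx
      rw [hlast_uh hxn] at hx
      rintro ⟨h1, -⟩
      exact hv'last x hx h1
    -- Reduced (W2 = invRev vh ++ W3)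
    have hredW2 : Reduced (FreeGroup.invRev vh ++ (uh ++ [(a', true)])) := by
      refine List.IsChain.append (reduced_invRev hred_vh) hredW3 ?_
      intro x hx y hy
      rw [getLast?_invRev] at hx
      simp only [Option.mem_def, Option.map_eq_some_iff] at hx
      obtain ⟨p, hp, rfl⟩ := hx
      have hvhn : vh ≠ [] := by rintro rfl; simp at hp
      rcases huh' : uh with _ | ⟨u0, urest⟩
      · -- uh = [] : y = (a', true)
        rw [huh'] at hy
        simp only [List.nil_append, List.head?_cons, Option.mem_def, Option.some.injEq] at hy
        subst hy
        rintro ⟨h1, h2⟩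
        simp only [fl] at h1 h2
        -- fl p = (p.1, !p.2) ; RR (fl p) (a',true) fails: p.1 = a' ∧ !p.2 = !true
        have hp2 : p.2 = true := by
          have := h2
          simp at this
          exact this
        have hpval : p = (a', true) := Prod.ext h1 hp2
        -- then v = v' ++ (a',true) :: _, contradicting hnd2
        apply hnd2
        have hv_eq : v = v' ++ vh := huh_nil huh'
        rcases vh with _ | ⟨p0, prest⟩
        · exact absurd rfl hvhn
        · simp only [List.head?_cons, Option.some.injEq] at hp
          subst hp
          rw [hv_eq, hpval]
          exact ⟨prest, by simp⟩
      · -- uh ≠ []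
        rw [huh'] at hy
        simp only [List.cons_append, List.head?_cons, Option.mem_def, Option.some.injEq] at hy
        subst hy
        rintro ⟨h1, h2⟩
        simp only [fl] at h1 h2
        have : p = u0 := Prod.ext h1 (by simpa using h2)
        apply hhead_ne hvhn (by simp [huh'])
        rw [huh']
        rcases hvh' : vh with _ | ⟨q0, qrest⟩
        · exact absurd hvh' hvhn
        · rw [hvh'] at hp
          simp only [List.head?_cons, Option.some.injEq] at hp
          subst hp
          simp [this]
    -- Reduced C'
    have hredC' : Reduced (bstep C v (v', a')) := by
      rw [hC', List.append_assoc, List.append_assoc]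
      refine List.IsChain.append hC ?_ ?_
      · first
        | exact hredW2
        | (rw [List.append_assoc]; exact hredW2)
        | (rw [← List.append_assoc]; exact hredW2)
      · intro x hx y hy
        rw [hClast] at hx
        simp only [Option.mem_def, Option.some.injEq] at hx
        subst hx
        rcases hvh' : vh with _ | ⟨p0, prest⟩
        · rcases huh' : uh with _ | ⟨u0, urest⟩
          · -- both empty: y = (a', true)
            rw [hvh', huh'] at hy
            simp only [FreeGroup.invRev, List.map_nil, List.reverse_nil, List.nil_append,
              List.head?_cons, Option.mem_def, Option.some.injEq] at hy
            subst hy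
            rintro ⟨-, h2⟩
            simp at h2
          · -- vh = [], uh ≠ [] : y = head uh ; use hnd1
            rw [hvh', huh'] at hy
            simp only [FreeGroup.invRev, List.map_nil, List.reverse_nil, List.nil_append,
              List.cons_append, List.head?_cons, Option.mem_def, Option.some.injEq] at hy
            subst hy
            rintro ⟨h1, h2⟩
            apply hnd1
            have hv_eq : v' = v ++ uh := hvh_nil hvh'
            rw [hv_eq, huh']
            have : u0 = (a, false) := Prod.ext h1.symm (by simpa using h2.symm)
            rw [this]
            exact ⟨urest, by simp⟩
        · -- vh ≠ [] : y = fl (last v)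
          have hvhn : vh ≠ [] := by rw [hvh']; simp
          have hn : FreeGroup.invRev vh ≠ [] := by
            simp only [FreeGroup.invRev, ne_eq, List.reverse_eq_nil_iff, List.map_eq_nil_iff]
            exact hvhn
          have hhy : y ∈ (FreeGroup.invRev vh).head? := by
            rcases List.exists_cons_of_ne_nil hn with ⟨z0, zrest, hz⟩
            rw [hz] at hy ⊢
            simpa using hy
          rw [head?_invRev, hlast_vh hvhn] at hhy
          simp only [Option.mem_def, Option.map_eq_some_iff] at hhy
          obtain ⟨p, hp, rfl⟩ := hhy
          rintro ⟨h1, -⟩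
          exact hvlast p hp h1.symm
    -- product step
    have hprod : FreeGroup.mk (C ++ FreeGroup.invRev v) * elt (v', a') =
        FreeGroup.mk (bstep C v (v', a') ++ FreeGroup.invRev v') := by
      have e1 : FreeGroup.mk v = FreeGroup.mk tt * FreeGroup.mk vh := by
        rw [FreeGroup.mul_mk, hvt]
      have e2 : FreeGroup.mk v' = FreeGroup.mk tt * FreeGroup.mk uh := by
        rw [FreeGroup.mul_mk, hv't]
      have e3 : FreeGroup.mk (C ++ FreeGroup.invRev v) =
          FreeGroup.mk C * (FreeGroup.mk v)⁻¹ := by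
        rw [FreeGroup.inv_mk, FreeGroup.mul_mk]
      have e4 : FreeGroup.mk (bstep C v (v', a') ++ FreeGroup.invRev v') =
          FreeGroup.mk C * (FreeGroup.mk vh)⁻¹ * FreeGroup.mk uh * FreeGroup.of a' *
            (FreeGroup.mk v')⁻¹ := by
        rw [hC', FreeGroup.inv_mk]
        rw [show FreeGroup.of a' = FreeGroup.mk [(a', true)] from rfl]
        rw [FreeGroup.inv_mk]
        simp only [FreeGroup.mul_mk, List.append_assoc]
      rw [e3, e4, elt, mk_cword, e1, e2]
      group
    -- apply IH
    have hC'last : (bstep C v (v', a')).getLast? = some (a', true) := by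
      rw [hC', List.getLast?_append_of_ne_nil _ (by simp)]
      rfl
    have hihyp := ih (bstep C v (v', a')) v' a' hredC' hC'last ⟨hv'red, hv'last⟩
      (fun q hq => hcl q (List.mem_cons_of_mem _ hq)) hchain'
    obtain ⟨hf1, hf2, hf3, hf4, hf5⟩ := hihyp
    have hCpre : C <+: bstep C v (v', a') := by
      rw [hC', List.append_assoc, List.append_assoc]
      exact List.prefix_append _ _
    have hbuild : build C v ((v', a') :: l) = build (bstep C v (v', a')) v' l := rfl
    rw [hbuild]
    refine ⟨hf1, hf2, hCpre.trans hf3, ?_, ?_⟩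
    · -- product
      rw [List.map_cons, List.prod_cons, ← mul_assoc, hprod, hf4]
    · -- backflow
      intro hCf hvtrue hvffalse
      have hC'f : ∀ p ∈ bstep C v (v', a'), p.2 = true := fun p hp =>
        hCf p (hf3.subset hp)
      -- vh = []
      have hvh0 : vh = [] := by
        refine List.eq_nil_iff_forall_not_mem.2 (fun p hp => ?_)
        have h1 : p.2 = true := hvtrue p (by rw [← hvt]; exact List.mem_append_right _ hp)
        have h2 : (fl p).2 = true := by
          refine hC'f (fl p) ?_
          rw [hC']
          refine List.mem_append_left _ (List.mem_append_left _ (List.mem_append_right _ ?_))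
          rw [mem_invRev]
          simpa [fl] using hp
        simp [fl, h1] at h2
      have hv'app : v' = v ++ uh := hvh_nil hvh0
      have hv'true : ∀ p ∈ v', p.2 = true := by
        intro p hp
        rw [hv'app] at hp
        rcases List.mem_append.1 hp with h | h
        · exact hvtrue p h
        · refine hC'f p ?_
          rw [hC']
          exact List.mem_append_left _ (List.mem_append_right _ h)
      obtain ⟨hv'0, hvf0, hl0, hCfstruct⟩ := hf5 hCf hv'true hvffalse
      have huh0 : uh = [] := by
        rcases List.append_eq_nil_iff.1 (hv'app ▸ hv'0) with ⟨-, h⟩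
        exact h
      have hv0 : v = [] := by
        rcases List.append_eq_nil_iff.1 (hv'app ▸ hv'0) with ⟨h, -⟩
        exact h
      refine ⟨hv0, hvf0, ?_, ?_⟩
      · intro q hq
        rcases List.mem_cons.1 hq with rfl | hq'
        · exact hv'0
        · exact hl0 q hq'
      · rw [hCfstruct, hC', hvh0, huh0]
        simp [FreeGroup.invRev]



lemma list_two_set_prod {G : Type*} [Group G] :
    ∀ (i : ℕ) (l : List G) (h : i + 1 < l.length),
      ((l.set i (l[i] * l[i+1] * l[i]⁻¹)).set (i+1) l[i]).prod = l.prod := by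
  intro i
  induction i with
  | zero =>
    intro l h
    match l with
    | x :: y :: tl =>
      simp only [List.getElem_cons_zero, List.getElem_cons_succ, List.set_cons_zero,
        List.set_cons_succ, List.prod_cons]
      group
  | succ i ih =>
    intro l h
    match l with
    | x :: tl =>
      have h' : i + 1 < tl.length := by simpa using h
      simp only [List.getElem_cons_succ, List.set_cons_succ, List.prod_cons]
      rw [ih tl h']

lemma ofFn_hmove_eq_set {G : Type*} [Group G] (n : ℕ) (i : ℕ) (hi : i + 1 < n)
    (t : Fin n → G) :
    List.ofFn (hmove n G i hi t) =
      ((List.ofFn t).set i (t ⟨i, by omega⟩ * t ⟨i+1, hi⟩ * (t ⟨i, by omega⟩)⁻¹)).set (i+1)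
        (t ⟨i, by omega⟩) := by
  apply List.ext_getElem
  · simp
  · intro k hk1 hk2
    have hkn : k < n := by simpa using hk1
    rw [List.getElem_ofFn]
    rw [List.getElem_set, List.getElem_set]
    by_cases hk : k = i
    · subst hk
      rw [if_neg (by omega), if_pos rfl]
      simp only [hmove, if_true, List.getElem_ofFn]
    · by_cases hk' : k = i + 1
      · subst hk'
        rw [if_pos rfl]
        simp only [hmove]
        rw [if_neg (by omega)]
        simp
      · rw [if_neg (fun hh => hk' hh.symm), if_neg (fun hh => hk hh.symm)]
        simp only [hmove]
        rw [if_neg (by simpa using hk), if_neg (by simpa using hk')]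
        rw [List.getElem_ofFn]

theorem prod_ofFn_hmove {G : Type*} [Group G] (n : ℕ) (i : ℕ) (hi : i + 1 < n) (t : Fin n → G) :
    (List.ofFn (hmove n G i hi t)).prod = (List.ofFn t).prod := by
  rw [ofFn_hmove_eq_set]
  have hlen : i + 1 < (List.ofFn t).length := by simpa using hi
  have e1 : (List.ofFn t)[i] = t ⟨i, by omega⟩ := by
    rw [List.getElem_ofFn]
  have e2 : (List.ofFn t)[i+1] = t ⟨i+1, hi⟩ := by
    rw [List.getElem_ofFn]
  rw [← e1, ← e2]
  exact list_two_set_prod i (List.ofFn t) hlen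



lemma reduced_of_all_true {w : List (α × Bool)} (h : ∀ p ∈ w, p.2 = true) : Reduced w := by
  induction w with
  | nil => exact List.isChain_nil
  | cons x xs ih =>
    refine List.isChain_cons.2 ⟨?_, ih fun p hp => h p (List.mem_cons_of_mem _ hp)⟩
    intro y hy
    have hx : x.2 = true := h x List.mem_cons_self
    have hyw : y ∈ xs := List.mem_of_mem_head? hy
    have hy2 : y.2 = true := h y (List.mem_cons_of_mem _ hyw)
    rintro ⟨-, h2⟩
    rw [hx, hy2] at h2
    simp at h2

lemma prod_map_of (l : List α) :
    (l.map FreeGroup.of).prod = FreeGroup.mk (l.map fun i => (i, true)) := by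
  induction l with
  | nil => rfl
  | cons x xs ih =>
    simp only [List.map_cons, List.prod_cons, ih]
    rw [show FreeGroup.of x = FreeGroup.mk [(x, true)] from rfl, FreeGroup.mul_mk]
    rfl

lemma sum_lt_of_two {n : ℕ} (f g : Fin n → ℕ) (i j : Fin n) (hij : i ≠ j)
    (hoff : ∀ x, x ≠ i → x ≠ j → g x = f x) (hlt : g i + g j < f i + f j) :
    ∑ x, g x < ∑ x, f x := by
  classical
  have hji : j ∈ Finset.univ.erase i := Finset.mem_erase.2 ⟨hij.symm, Finset.mem_univ _⟩
  rw [← Finset.add_sum_erase _ f (Finset.mem_univ i),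
    ← Finset.add_sum_erase _ g (Finset.mem_univ i),
    ← Finset.add_sum_erase _ f hji, ← Finset.add_sum_erase _ g hji]
  have hrest : ∑ x ∈ (Finset.univ.erase i).erase j, g x =
      ∑ x ∈ (Finset.univ.erase i).erase j, f x := by
    refine Finset.sum_congr rfl fun x hx => ?_
    have hx1 := Finset.mem_erase.1 hx
    have hx2 := Finset.mem_erase.1 hx1.2
    exact hoff x hx2.1 hx1.1
  rw [hrest]
  omega

lemma Rset_mul_conj {n : ℕ} {r s : FreeGroup (Fin n)} (hr : r ∈ Rset n) (hs : s ∈ Rset n) :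
    r * s * r⁻¹ ∈ Rset n := by
  obtain ⟨w, i, rfl⟩ := hs
  exact ⟨r * w, i, by group⟩

lemma mk_cword_mem_Rset {n : ℕ} (v : List (Fin n × Bool)) (a : Fin n) :
    FreeGroup.mk (cword v a) ∈ Rset n :=
  ⟨FreeGroup.mk v, a, mk_cword v a⟩

lemma hmove_mem_RedR {n : ℕ} {i : ℕ} {hi : i + 1 < n} {t : Fin n → FreeGroup (Fin n)}
    (ht : t ∈ RedR n) : hmove n (FreeGroup (Fin n)) i hi t ∈ RedR n := by
  constructor
  · intro j
    simp only [hmove]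
    split_ifs with h1 h2
    · exact Rset_mul_conj (ht.1 _) (ht.1 _)
    · exact ht.1 _
    · exact ht.1 _
  · rw [prod_ofFn_hmove]
    exact ht.2

lemma hmove_at_i {G : Type*} [Group G] {n i : ℕ} {hi : i + 1 < n} (t : Fin n → G) :
    hmove n G i hi t ⟨i, by omega⟩ = t ⟨i, by omega⟩ * t ⟨i+1, hi⟩ * (t ⟨i, by omega⟩)⁻¹ := by
  simp [hmove]

lemma hmove_at_i1 {G : Type*} [Group G] {n i : ℕ} {hi : i + 1 < n} (t : Fin n → G) :
    hmove n G i hi t ⟨i+1, hi⟩ = t ⟨i, by omega⟩ := by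
  simp [hmove]

lemma hmove_at_other {G : Type*} [Group G] {n i : ℕ} {hi : i + 1 < n} (t : Fin n → G)
    (j : Fin n) (h1 : (j : ℕ) ≠ i) (h2 : (j : ℕ) ≠ i + 1) :
    hmove n G i hi t j = t j := by
  simp [hmove, h1, h2]

lemma norm_conj_le {n : ℕ} (v : List (Fin n × Bool)) (a : Fin n) :
    (FreeGroup.mk (cword v a)).norm ≤ 2 * v.length + 1 := by
  have := FreeGroup.norm_mk_le (L₁ := cword v a)
  rwa [cword_length] at this


end HurwitzProofAux

set_option maxHeartbeats 1000000 in
open HurwitzProofAux in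
lemma toBase (n : ℕ) : ∀ (M : ℕ) (t : Fin n → FreeGroup (Fin n)), t ∈ RedR n →
    (∑ i, (t i).norm) = M →
    Relation.EqvGen (hstep n (FreeGroup (Fin n))) t (fun i => FreeGroup.of i) := by
  intro M
  induction M using Nat.strong_induction_on with
  | _ M IH =>
    intro t ht hM
    -- canonical data
    have hcanon : ∀ i : Fin n, ∃ va : (List (Fin n × Bool)) × (Fin n),
        Canon va.1 va.2 ∧ t i = FreeGroup.mk (cword va.1 va.2) := by
      intro i
      obtain ⟨w, j, hw⟩ := ht.1 i
      obtain ⟨v, hv, he⟩ := exists_canon w j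
      exact ⟨(v, j), hv, by rw [hw, he]⟩
    choose d hd1 hd2 using hcanon
    have hnorm : ∀ i, (t i).norm = 2 * (d i).1.length + 1 := by
      intro i
      rw [hd2 i, norm_mk_eq (cword_reduced (hd1 i)), cword_length]
    by_cases hdec : ∃ k : ℕ, ∃ hk : k + 1 < n,
        (((d ⟨k, by omega⟩).1 ++ [((d ⟨k, by omega⟩).2, false)] <+: (d ⟨k+1, hk⟩).1) ∨
         ((d ⟨k+1, hk⟩).1 ++ [((d ⟨k+1, hk⟩).2, true)] <+: (d ⟨k, by omega⟩).1))
    · obtain ⟨k, hk, hor⟩ := hdec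
      set K : Fin n := ⟨k, by omega⟩ with hK
      set K1 : Fin n := ⟨k+1, hk⟩ with hK1
      have hKK1 : K ≠ K1 := by
        intro h
        have := congrArg Fin.val h
        simp [hK, hK1] at this
      rcases hor with hpre | hpre
      · -- case A : sigma move decreases
        obtain ⟨w, hw⟩ := hpre
        have hK1eq : (d K1).1 = ((d K).1 ++ [((d K).2, false)]) ++ w := hw.symm
        have hmkv' : FreeGroup.mk (d K1).1 =
            FreeGroup.mk (d K).1 * (FreeGroup.of (d K).2)⁻¹ * FreeGroup.mk w := by
          rw [hK1eq, ← FreeGroup.mul_mk, ← FreeGroup.mul_mk, mk_single_false]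
        have hconj : t K * t K1 * (t K)⁻¹ =
            FreeGroup.mk (cword ((d K).1 ++ w) (d K1).2) := by
          rw [hd2 K, hd2 K1, mk_cword, mk_cword, mk_cword, hmkv', ← FreeGroup.mul_mk]
          group
        set t' := hmove n (FreeGroup (Fin n)) k hk t with ht'
        have ht'mem : t' ∈ RedR n := hmove_mem_RedR ht
        have ht'K : t' K = t K * t K1 * (t K)⁻¹ := hmove_at_i t
        have ht'K1 : t' K1 = t K := hmove_at_i1 t
        have ht'off : ∀ x, x ≠ K → x ≠ K1 → t' x = t x := by
          intro x hx1 hx2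
          exact hmove_at_other t x (fun h => hx1 (Fin.ext h)) (fun h => hx2 (Fin.ext h))
        have hsum : (∑ x, (t' x).norm) < ∑ x, (t x).norm := by
          refine sum_lt_of_two _ _ K K1 hKK1 (fun x h1 h2 => by rw [ht'off x h1 h2]) ?_
          have e1 : (t' K).norm ≤ 2 * ((d K).1.length + w.length) + 1 := by
            rw [ht'K, hconj]
            have := norm_conj_le ((d K).1 ++ w) (d K1).2
            simpa using this
          have e2 : (t' K1).norm = (t K).norm := by rw [ht'K1]
          have e3 : (t K1).norm = 2 * ((d K).1.length + 1 + w.length) + 1 := by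
            rw [hnorm K1, hK1eq]
            simp
            omega
          omega
        refine Relation.EqvGen.trans _ t' _ (Relation.EqvGen.rel _ _ ⟨k, hk, rfl⟩) ?_
        exact IH _ (hM ▸ hsum) t' ht'mem rfl
      · -- case B : inverse sigma move decreases
        obtain ⟨w, hw⟩ := hpre
        have hKeq : (d K).1 = ((d K1).1 ++ [((d K1).2, true)]) ++ w := hw.symm
        have hmkv : FreeGroup.mk (d K).1 =
            FreeGroup.mk (d K1).1 * FreeGroup.of (d K1).2 * FreeGroup.mk w := by
          rw [hKeq, ← FreeGroup.mul_mk, ← FreeGroup.mul_mk]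
          rfl
        set Y := FreeGroup.mk (cword ((d K1).1 ++ w) (d K).2) with hY
        have hsY : t K1 * Y * (t K1)⁻¹ = t K := by
          rw [hd2 K, hd2 K1, hY, mk_cword, mk_cword, mk_cword, hmkv, ← FreeGroup.mul_mk]
          group
        set t' : Fin n → FreeGroup (Fin n) := fun j =>
          if (j : ℕ) = k then t K1 else if (j : ℕ) = k + 1 then Y else t j with ht'
        have hKval : (K : ℕ) = k := rfl
        have hK1val : (K1 : ℕ) = k + 1 := rfl
        have ht'K : t' K = t K1 := by
          show (if (K : ℕ) = k then t K1 else if (K : ℕ) = k + 1 then Y else t K) = t K1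
          rw [if_pos hKval]
        have ht'K1 : t' K1 = Y := by
          show (if (K1 : ℕ) = k then t K1 else if (K1 : ℕ) = k + 1 then Y else t K1) = Y
          rw [if_neg (by rw [hK1val]; omega), if_pos hK1val]
        have ht'off : ∀ x, x ≠ K → x ≠ K1 → t' x = t x := by
          intro x hx1 hx2
          show (if (x : ℕ) = k then t K1 else if (x : ℕ) = k + 1 then Y else t x) = t x
          rw [if_neg (fun h => hx1 (Fin.ext (h.trans hKval.symm))),
            if_neg (fun h => hx2 (Fin.ext (h.trans hK1val.symm)))]
        have hmv : hmove n (FreeGroup (Fin n)) k hk t' = t := by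
          funext j
          simp only [hmove]
          by_cases h1 : (j : ℕ) = k
          · rw [if_pos h1]
            have hjK : j = K := Fin.ext h1
            have e1 : t' ⟨k, by omega⟩ = t K1 := ht'K
            have e2 : t' ⟨k+1, hk⟩ = Y := ht'K1
            rw [e1, e2, hsY, hjK]
          · rw [if_neg h1]
            by_cases h2 : (j : ℕ) = k + 1
            · rw [if_pos h2]
              have hjK1 : j = K1 := Fin.ext h2
              rw [ht'K, hjK1]
            · rw [if_neg h2]
              exact ht'off j (fun h => h1 (by rw [h])) (fun h => h2 (by rw [h]))
        have ht'mem : t' ∈ RedR n := by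
          constructor
          · intro j
            simp only [ht']
            split_ifs with h1 h2
            · exact ht.1 K1
            · exact mk_cword_mem_Rset _ _
            · exact ht.1 j
          · have := prod_ofFn_hmove n k hk t'
            rw [hmv] at this
            rw [← this]
            exact ht.2
        have hsum : (∑ x, (t' x).norm) < ∑ x, (t x).norm := by
          refine sum_lt_of_two _ _ K K1 hKK1 (fun x h1 h2 => by rw [ht'off x h1 h2]) ?_
          have e1 : (t' K1).norm ≤ 2 * ((d K1).1.length + w.length) + 1 := by
            rw [ht'K1, hY]
            have := norm_conj_le ((d K1).1 ++ w) (d K).2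
            simpa using this
          have e2 : (t' K).norm = (t K1).norm := by rw [ht'K]
          have e3 : (t K).norm = 2 * ((d K1).1.length + 1 + w.length) + 1 := by
            rw [hnorm K, hKeq]
            simp
            omega
          omega
        refine Relation.EqvGen.trans _ t' _
          (Relation.EqvGen.symm _ _ (Relation.EqvGen.rel t' t ⟨k, hk, hmv.symm⟩)) ?_
        exact IH _ (hM ▸ hsum) t' ht'mem rfl
    · -- no decreasing move : t is the base tuple
      by_cases hn : n = 0
      · subst hn
        have : t = fun i => FreeGroup.of i := funext fun i => i.elim0
        rw [this]
        exact Relation.EqvGen.refl _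
      obtain ⟨m, rfl⟩ : ∃ m, n = m + 1 := ⟨n - 1, by omega⟩
      push_neg at hdec
      -- chain of canonical data
      set dtail : List ((List (Fin (m+1) × Bool)) × Fin (m+1)) :=
        List.ofFn (fun j : Fin m => d j.succ) with hdtail
      have hdl : List.ofFn d = d 0 :: dtail := by
        rw [hdtail, List.ofFn_succ]
      have hchain : List.Chain ND (d 0) dtail := by
        have hch' : List.Chain' ND (List.ofFn d) := by
          rw [List.Chain', List.isChain_iff_getElem]
          intro i hlen
          rw [List.getElem_ofFn, List.getElem_ofFn]
          have hi : i + 1 < m + 1 := by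
            simp only [List.length_ofFn] at hlen
            omega
          have := hdec i hi
          have hc1 : (Fin.cast (by simp) (⟨i, by omega⟩ : Fin (List.ofFn d).length)) =
              (⟨i, by omega⟩ : Fin (m+1)) := by
            apply Fin.ext
            simp
          have hc2 : (Fin.cast (by simp) (⟨i+1, by omega⟩ : Fin (List.ofFn d).length)) =
              (⟨i+1, hi⟩ : Fin (m+1)) := by
            apply Fin.ext
            simp
          exact ⟨this.1, this.2⟩
        rw [hdl] at hch'
        exact hch'
      -- apply build_spec
      set C₀ : List (Fin (m+1) × Bool) := (d 0).1 ++ [((d 0).2, true)] with hC₀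
      have hcw0 : cword (d 0).1 (d 0).2 = C₀ ++ FreeGroup.invRev (d 0).1 := by
        rw [hC₀, cword, List.append_assoc]
        rfl
      have hred0 : Reduced C₀ :=
        (cword_reduced (hd1 0)).prefix ⟨FreeGroup.invRev (d 0).1, hcw0.symm⟩
      have hlast0 : C₀.getLast? = some ((d 0).2, true) := by
        rw [hC₀, List.getLast?_append_of_ne_nil _ (by simp)]
        rfl
      have hcantail : ∀ q ∈ dtail, Canon q.1 q.2 := by
        intro q hq
        rw [hdtail, List.mem_ofFn] at hq
        obtain ⟨j, rfl⟩ := hq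
        exact hd1 _
      obtain ⟨hf1, ⟨af, haf, hcanf⟩, hf3, hf4, hf5⟩ :=
        build_spec dtail C₀ (d 0).1 (d 0).2 hred0 hlast0 (hd1 0) hcantail hchain
      -- the product is gElt
      have hofFn_t : List.ofFn t = (List.ofFn d).map elt := by
        rw [List.map_ofFn]
        congr 1
        funext i
        exact hd2 i
      have hgprod : FreeGroup.mk ((build C₀ (d 0).1 dtail).1 ++
          FreeGroup.invRev (build C₀ (d 0).1 dtail).2) = gElt (m+1) := by
        rw [← hf4]
        have : (List.ofFn t).prod = gElt (m+1) := ht.2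
        rw [hofFn_t, hdl] at this
        simp only [List.map_cons, List.prod_cons] at this
        rw [← this]
        congr 1
        rw [elt, hcw0]
      have hgword : gElt (m+1) =
          FreeGroup.mk ((List.finRange (m+1)).map fun i => (i, true)) := by
        rw [gElt, List.ofFn_eq_map, prod_map_of]
      have hredg : Reduced ((List.finRange (m+1)).map fun i : Fin (m+1) => (i, true)) := by
        apply reduced_of_all_true
        intro p hp
        rw [List.mem_map] at hp
        obtain ⟨i, -, rfl⟩ := hp
        rfl
      have hredf : Reduced ((build C₀ (d 0).1 dtail).1 ++
          FreeGroup.invRev (build C₀ (d 0).1 dtail).2) := by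
        refine List.IsChain.append hf1 (reduced_invRev hcanf.1) ?_
        intro x hx y hy
        rw [haf] at hx
        simp only [Option.mem_def, Option.some.injEq] at hx
        subst hx
        rw [head?_invRev] at hy
        simp only [Option.mem_def, Option.map_eq_some_iff] at hy
        obtain ⟨p, hp, rfl⟩ := hy
        rintro ⟨h1, -⟩
        exact hcanf.2 p hp h1.symm
      have hwords : (build C₀ (d 0).1 dtail).1 ++
          FreeGroup.invRev (build C₀ (d 0).1 dtail).2 =
          (List.finRange (m+1)).map (fun i => (i, true)) :=
        mk_eq_mk_of_reduced hredf hredg (by rw [hgprod, hgword])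
      have hpos : ∀ p ∈ (build C₀ (d 0).1 dtail).1 ++
          FreeGroup.invRev (build C₀ (d 0).1 dtail).2, p.2 = true := by
        rw [hwords]
        intro p hp
        rw [List.mem_map] at hp
        obtain ⟨i, -, rfl⟩ := hp
        rfl
      have hCfpos : ∀ p ∈ (build C₀ (d 0).1 dtail).1, p.2 = true :=
        fun p hp => hpos p (List.mem_append_left _ hp)
      have hv0pos : ∀ p ∈ (d 0).1, p.2 = true := by
        intro p hp
        refine hCfpos p (hf3.subset ?_)
        rw [hC₀]
        exact List.mem_append_left _ hp
      have hvffalse : ∀ p ∈ (build C₀ (d 0).1 dtail).2, p.2 = false := by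
        intro p hp
        have h1 : fl p ∈ FreeGroup.invRev (build C₀ (d 0).1 dtail).2 := by
          rw [mem_invRev]
          simpa [fl] using hp
        have := hpos (fl p) (List.mem_append_right _ h1)
        simp only [fl] at this
        simpa using this
      obtain ⟨hv00, hvf0, htail0, hCfstruct⟩ := hf5 hCfpos hv0pos hvffalse
      -- identify the data
      have hmapeq : (List.ofFn d).map (fun q => (q.2, true)) =
          (List.finRange (m+1)).map fun i => (i, true) := by
        rw [← hwords, hvf0, hCfstruct, hC₀, hv00]
        rw [hdl]
        simp [FreeGroup.invRev]
      have h2 : ∀ i, (d i).2 = i := by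
        have := congrArg (List.map Prod.fst) hmapeq
        simp only [List.map_map] at this
        rw [List.map_ofFn] at this
        have hfr : (List.finRange (m+1)).map ((fun p : (Fin (m+1)) × Bool => p.1) ∘
            (fun i : Fin (m+1) => (i, true))) = List.ofFn (fun i : Fin (m+1) => i) := by
          rw [← List.ofFn_eq_map]
          rfl
        rw [hfr] at this
        intro i
        have := congrFun (List.ofFn_inj.1 this) i
        simpa using this
      have h1 : ∀ i, (d i).1 = [] := by
        intro i
        induction i using Fin.cases with
        | zero => exact hv00
        | succ j =>
          refine htail0 (d j.succ) ?_
          rw [hdtail, List.mem_ofFn]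
          exact ⟨j, rfl⟩
      have htb : t = fun i => FreeGroup.of i := by
        funext i
        rw [hd2 i, h1 i]
        have : cword ([] : List (Fin (m+1) × Bool)) (d i).2 = [((d i).2, true)] := rfl
        rw [this, h2 i]
        rfl
      rw [htb]
      exact Relation.EqvGen.refl _

/-- (Artin) The Hurwitz action of `B_n` is transitive on `Red_R(g)`,
the `n`-tuples of conjugates of the free generators with product `g = f_1 ⋯ f_n`. -/
theorem hurwitz_transitive_RedR (n : ℕ) :
    ∀ a ∈ RedR n, ∀ b ∈ RedR n, Relation.EqvGen (hstep n (FreeGroup (Fin n))) a b := by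
  intro a ha b hb
  exact Relation.EqvGen.trans _ _ _ (toBase n _ a ha rfl)
    (Relation.EqvGen.symm _ _ (toBase n _ b hb rfl))
end

section
/- If w is the concatenation of normal forms of reflections t_1,…,t_n in W_n whose product is c = s_1⋯s_n, and some execution of the cancellation procedure reducing w to (s_1,…,s_n) never cancels any of the n content (middle) letters, then all normal forms are single letters and (t_1,…,t_n) = (s_1,…,s_n). -/
/-- Cancellation step on marked words: delete an adjacent equal pair of unmarked letters. -/
def mstep (n : ℕ) (a b : List (Fin n × Bool)) : Prop :=
  ∃ (x y : List (Fin n × Bool)) (c : Fin n),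
    a = x ++ (c, false) :: (c, false) :: y ∧ b = x ++ y

/-- The marked normal form of a reflection `u_1 ⋯ u_k s u_k ⋯ u_1`,
with the content letter `s` marked. -/
def mword {n : ℕ} (u : List (Fin n)) (j : Fin n) : List (Fin n × Bool) :=
  u.map (·, false) ++ (j, true) :: u.reverse.map (·, false)

namespace UntouchedAux
open List

variable {n : ℕ}

lemma sgen_mul_self (c : Fin n) : sgen c * sgen c = 1 := by
  have h : ((PresentedGroup.mk (coxRels n)) (FreeGroup.of c * FreeGroup.of c)) = 1 := by
    show ((FreeGroup.of c * FreeGroup.of c : FreeGroup (Fin n)) :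
      FreeGroup (Fin n) ⧸ Subgroup.normalClosure (coxRels n)) = 1
    rw [QuotientGroup.eq_one_iff]
    exact Subgroup.subset_normalClosure ⟨c, rfl⟩
  simpa [sgen, PresentedGroup.of, map_mul] using h

/-- Reduced words. -/
def RW (n : ℕ) := {l : List (Fin n) // List.Chain' (· ≠ ·) l}

/-- The letter action on plain lists. -/
def af (i : Fin n) : List (Fin n) → List (Fin n)
  | [] => [i]
  | a :: t => if a = i then t else i :: a :: t

lemma af_chain' (i : Fin n) {l : List (Fin n)} (h : Chain' (· ≠ ·) l) :
    Chain' (· ≠ ·) (af i l) := by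
  cases l with
  | nil => exact List.isChain_singleton i
  | cons a t =>
    by_cases ha : a = i
    · simp only [af, if_pos ha]; exact h.tail
    · simp only [af, if_neg ha]
      exact List.isChain_cons_cons.2 ⟨Ne.symm ha, h⟩

lemma af_af (i : Fin n) {l : List (Fin n)} (h : Chain' (· ≠ ·) l) :
    af i (af i l) = l := by
  cases l with
  | nil => simp [af]
  | cons a t =>
    by_cases ha : a = i
    · subst ha
      cases t with
      | nil => simp [af]
      | cons b t' =>
        have hab : a ≠ b := (List.isChain_cons_cons.mp h).1
        simp [af, Ne.symm hab]
    · simp [af, ha]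

def eperm (i : Fin n) : Equiv.Perm (RW n) :=
  Function.Involutive.toPerm (fun l => ⟨af i l.1, af_chain' i l.2⟩)
    (fun l => Subtype.ext (af_af i l.2))

lemma eperm_apply (i : Fin n) (l : RW n) :
    (eperm i l : RW n).1 = af i l.1 := rfl

def phi (n : ℕ) : UCox n →* Equiv.Perm (RW n) :=
  PresentedGroup.toGroup (f := eperm) (by
    rintro r ⟨i, rfl⟩
    rw [map_mul, FreeGroup.lift_apply_of]
    ext x
    apply Subtype.ext
    show af i (af i x.1) = x.1
    exact af_af i x.2)

lemma phi_sgen (i : Fin n) : phi n (sgen i) = eperm i :=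
  PresentedGroup.toGroup.of _

lemma chain'_nil : Chain' (· ≠ ·) ([] : List (Fin n)) := List.isChain_nil

lemma phi_prod (l : List (Fin n)) (h : Chain' (· ≠ ·) l) :
    (phi n ((l.map sgen).prod) ⟨[], chain'_nil⟩ : RW n) = ⟨l, h⟩ := by
  induction l with
  | nil => simp; rfl
  | cons a t ih =>
    have ht : Chain' (· ≠ ·) t := h.tail
    rw [map_cons, prod_cons, map_mul]
    show (phi n (sgen a)) ((phi n (map sgen t).prod) ⟨[], chain'_nil⟩) = ⟨a :: t, h⟩
    rw [ih ht, phi_sgen]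
    apply Subtype.ext
    show af a t = a :: t
    cases t with
    | nil => simp [af]
    | cons b t' =>
      have hb : b ≠ a := Ne.symm (List.isChain_cons_cons.mp h).1
      simp [af, hb]

lemma reduced_eq {l₁ l₂ : List (Fin n)} (h₁ : Chain' (· ≠ ·) l₁)
    (h₂ : Chain' (· ≠ ·) l₂) (hp : (l₁.map sgen).prod = (l₂.map sgen).prod) :
    l₁ = l₂ := by
  have e1 := phi_prod l₁ h₁
  rw [hp, phi_prod l₂ h₂] at e1
  exact (congrArg Subtype.val e1).symm

lemma reduced_nil {l : List (Fin n)} (h : Chain' (· ≠ ·) l)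
    (hp : (l.map sgen).prod = 1) : l = [] :=
  reduced_eq h chain'_nil (by simpa using hp)

/-- Products of first components. -/
def wprod (l : List (Fin n × Bool)) : UCox n := (l.map (fun p => sgen p.1)).prod

/-- Segment products (split at marked letters). -/
def segs : List (Fin n × Bool) → List (UCox n)
  | [] => [1]
  | (_, true) :: t => 1 :: segs t
  | (c, false) :: t => (sgen c * (segs t).headI) :: (segs t).tail

lemma segs_eq (l : List (Fin n × Bool)) : segs l = (segs l).headI :: (segs l).tail := by
  match l with
  | [] => rfl
  | (_, true) :: t => rfl
  | (c, false) :: t => rfl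

lemma segs_true (m : Fin n) (l : List (Fin n × Bool)) :
    segs ((m, true) :: l) = 1 :: segs l := rfl

lemma segs_false (c : Fin n) (l : List (Fin n × Bool)) :
    segs ((c, false) :: l) = (sgen c * (segs l).headI) :: (segs l).tail := rfl

lemma segs_cancel (x y : List (Fin n × Bool)) (c : Fin n) :
    segs (x ++ (c, false) :: (c, false) :: y) = segs (x ++ y) := by
  induction x with
  | nil =>
    simp only [nil_append, segs_false, headI_cons, tail_cons, ← mul_assoc,
      sgen_mul_self, one_mul]
    exact (segs_eq y).symm
  | cons p x ih =>
    obtain ⟨a, b⟩ := p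
    cases b
    · simp only [cons_append, segs_false, ih]
    · simp only [cons_append, segs_true, ih]

lemma mstep_wprod {a b : List (Fin n × Bool)} (h : mstep n a b) : wprod a = wprod b := by
  obtain ⟨x, y, c, rfl, rfl⟩ := h
  have key : ∀ P : UCox n, sgen c * (sgen c * P) = P := fun P => by
    rw [← mul_assoc, sgen_mul_self, one_mul]
  simp [wprod, key]

lemma mstep_filter {a b : List (Fin n × Bool)} (h : mstep n a b) :
    a.filter (·.2) = b.filter (·.2) := by
  obtain ⟨x, y, c, rfl, rfl⟩ := h
  simp [List.filter_append]

lemma mstep_segs {a b : List (Fin n × Bool)} (h : mstep n a b) : segs a = segs b := by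
  obtain ⟨x, y, c, rfl, rfl⟩ := h
  exact segs_cancel x y c

lemma rtg_inv {a b : List (Fin n × Bool)}
    (h : Relation.ReflTransGen (mstep n) a b) :
    wprod a = wprod b ∧ a.filter (·.2) = b.filter (·.2) ∧ segs a = segs b := by
  induction h with
  | refl => exact ⟨rfl, rfl, rfl⟩
  | tail _ hst ih =>
    exact ⟨ih.1.trans (mstep_wprod hst), ih.2.1.trans (mstep_filter hst),
      ih.2.2.trans (mstep_segs hst)⟩

lemma segs_falsemap (v : List (Fin n)) (l : List (Fin n × Bool)) :
    segs (v.map (·, false) ++ l) =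
      ((v.map sgen).prod * (segs l).headI) :: (segs l).tail := by
  induction v with
  | nil => rw [map_nil, nil_append, map_nil, prod_nil, one_mul]; exact segs_eq l
  | cons a v ih =>
    rw [map_cons, cons_append, segs_false, ih, headI_cons, tail_cons, map_cons,
      prod_cons, mul_assoc]

lemma segs_truemap (l : List (Fin n)) :
    segs (l.map (·, true)) = replicate (l.length + 1) 1 := by
  induction l with
  | nil => rfl
  | cons a t ih => rw [map_cons, segs_true, ih]; rfl

lemma flatten_singletons {α β : Type*} (f : α → β) (l : List α) :
    (l.map (fun a => [f a])).flatten = l.map f := by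
  induction l with
  | nil => rfl
  | cons a t ih => simp [ih]

lemma segC (u : Fin n → List (Fin n)) (j : Fin n → Fin n)
    (hu : ∀ i, Chain' (· ≠ ·) (u i)) :
    ∀ is : List (Fin n),
      segs ((is.map (fun i => mword (u i) (j i))).flatten) = replicate (is.length + 1) 1 →
      ∀ i ∈ is, u i = [] := by
  intro is
  induction is with
  | nil => intro _ i hi; exact absurd hi not_mem_nil
  | cons i is ih =>
    intro hseg k hk
    rw [map_cons, flatten_cons, mword, append_assoc, segs_falsemap, cons_append,
      segs_true, headI_cons, tail_cons, length_cons] at hseg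
    have hrep : replicate (is.length + 1 + 1) (1 : UCox n) =
        1 :: replicate (is.length + 1) 1 := rfl
    rw [hrep] at hseg
    have h1 : ((u i).map sgen).prod * 1 = 1 := (List.cons.injEq _ _ _ _ ▸ hseg).1
    have hui : u i = [] := reduced_nil (hu i) (by simpa using h1)
    have h2 : segs ((is.map (fun i => mword (u i) (j i))).flatten) =
        replicate (is.length + 1) 1 := by
      have := (List.cons.injEq _ _ _ _ ▸ hseg).2
      rwa [hui] at this
      -- after u i = [], reverse = [], map = [], nil_append
    rcases mem_cons.mp hk with rfl | hk'
    · exact hui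
    · exact ih h2 k hk'

theorem main (n : ℕ) (u : Fin n → List (Fin n)) (j : Fin n → Fin n)
    (hnf : ∀ i, List.Chain' (· ≠ ·) (u i ++ j i :: (u i).reverse))
    (hprod : (List.ofFn fun i => ((u i ++ j i :: (u i).reverse).map sgen).prod).prod
        = coxElt n)
    (hexec : ∃ N : List (Fin n × Bool),
      Relation.ReflTransGen (mstep n) ((List.ofFn fun i => mword (u i) (j i)).flatten) N ∧
      List.Chain' (fun p q => p.1 ≠ q.1) N) :
    (∀ i, u i = []) ∧
    (∀ i, ((u i ++ j i :: (u i).reverse).map sgen).prod = sgen i) := by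
  classical
  obtain ⟨N, hR, hN⟩ := hexec
  obtain ⟨hW, hF, hS⟩ := rtg_inv hR
  set L0 := (List.ofFn fun i => mword (u i) (j i)).flatten with hL0
  have hmword : ∀ i, (mword (u i) (j i)).map (fun p : Fin n × Bool => sgen p.1)
      = (u i ++ j i :: (u i).reverse).map sgen := by
    intro i; simp [mword, List.map_append, List.map_map, Function.comp_def]
  have h2 : wprod L0 = coxElt n := by
    rw [← hprod]
    rw [wprod, hL0, List.map_flatten, List.prod_flatten, List.map_ofFn, List.map_ofFn]
    exact congrArg _ (List.ofFn_inj.mpr (funext fun i => by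
      simp only [Function.comp]; rw [hmword i]))
  have hfm : ∀ i, (mword (u i) (j i)).filter (·.2) = [(j i, true)] := by
    intro i
    simp [mword, List.filter_append, List.filter_map, Function.comp_def]
  have h3 : L0.filter (·.2) = List.ofFn (fun i => (j i, true)) := by
    rw [hL0, List.filter_flatten, List.map_ofFn]
    have e : ((fun l : List (Fin n × Bool) => l.filter (·.2)) ∘
        fun i => mword (u i) (j i)) = fun i => [(j i, true)] := funext fun i => hfm i
    rw [e, List.ofFn_eq_map, flatten_singletons (fun i : Fin n => (j i, true)),
      ← List.ofFn_eq_map]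
  have h3' : N.filter (·.2) = List.ofFn (fun i => (j i, true)) := hF.symm.trans h3
  have hNred : List.Chain' (· ≠ ·) (N.map Prod.fst) := (List.isChain_map Prod.fst).mpr hN
  have hfin : List.Chain' (· ≠ ·) (List.finRange n) := (List.nodup_finRange n).isChain
  have hNprod : ((N.map Prod.fst).map sgen).prod = ((List.finRange n).map sgen).prod := by
    have e : ((N.map Prod.fst).map sgen).prod = wprod N := by
      simp [wprod, List.map_map, Function.comp_def]
    rw [e, ← hW, h2, coxElt, List.ofFn_eq_map]
  have h5 : N.map Prod.fst = List.finRange n := reduced_eq hNred hfin hNprod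
  have hlen : N.length = n := by
    have := congrArg List.length h5; simpa using this
  have hall : ∀ p ∈ N, p.2 = true := by
    apply List.length_filter_eq_length_iff.mp
    rw [h3']; simp [hlen]
  have h6 : N = List.ofFn (fun i => (j i, true)) := by
    rw [← h3']
    exact (List.filter_eq_self.mpr hall).symm
  have h7 : ∀ i, j i = i := by
    have e1 : N.map Prod.fst = List.ofFn j := by rw [h6, List.map_ofFn]; rfl
    have e2 : List.finRange n = List.ofFn (fun i : Fin n => i) := by
      rw [List.ofFn_eq_map]; simp
    have e3 : List.ofFn j = List.ofFn (fun i : Fin n => i) := by rw [← e1, h5, e2]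
    intro i
    exact congrFun (List.ofFn_inj.mp e3) i
  have hsegsN : segs N = List.replicate (n + 1) (1 : UCox n) := by
    rw [h6]
    have e : List.ofFn (fun i => (j i, true)) = (List.ofFn j).map (·, true) := by
      rw [List.map_ofFn]; rfl
    rw [e, segs_truemap]
    simp
  have hu : ∀ i, List.Chain' (· ≠ ·) (u i) := fun i =>
    (hnf i).prefix ((u i).prefix_append _)
  have h8 : ∀ i ∈ List.finRange n, u i = [] := by
    apply segC u j hu (List.finRange n)
    have : segs L0 = List.replicate (n + 1) 1 := hS.trans hsegsN
    rw [hL0, List.ofFn_eq_map] at this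
    simpa using this
  have hu0 : ∀ i, u i = [] := fun i => h8 i (List.mem_finRange i)
  refine ⟨hu0, fun i => ?_⟩
  rw [hu0 i, h7 i]
  simp

end UntouchedAux


/-- If the concatenation of the normal forms of reflections `t_1,…,t_n` with product
`c = s_1 ⋯ s_n` admits an execution of the cancellation procedure reaching a normal form
without ever cancelling a content letter, then all normal forms are single letters and
`(t_1,…,t_n) = (s_1,…,s_n)`. -/
theorem untouched_contents_case (n : ℕ) (u : Fin n → List (Fin n)) (j : Fin n → Fin n)
    (hnf : ∀ i, List.Chain' (· ≠ ·) (u i ++ j i :: (u i).reverse))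
    (hprod : (List.ofFn fun i => ((u i ++ j i :: (u i).reverse).map sgen).prod).prod
        = coxElt n)
    (hexec : ∃ N : List (Fin n × Bool),
      Relation.ReflTransGen (mstep n) ((List.ofFn fun i => mword (u i) (j i)).flatten) N ∧
      List.Chain' (fun p q => p.1 ≠ q.1) N) :
    (∀ i, u i = []) ∧
    (∀ i, ((u i ++ j i :: (u i).reverse).map sgen).prod = sgen i) := by
  exact UntouchedAux.main n u j hnf hprod hexec
end

section
/- Let M be a monoid presented with generating set R_g = {f_1,…,f_n regarded as conjugates occurring in the Hurwitz orbit of (f_1,…,f_n)} and relations r r' = r'' r whenever some tuple in Red_R(g) starts with (r, r', …) and r'' = r r' r^{-1}. Then the group defined by this presentation is isomorphic to the free group F_n. (I.e., the Hurwitz 'dual' presentation presents F_n.) -/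
/-- The set `R_g` of entries of tuples in the Hurwitz orbit `Red_R(g)` of `(f_1,…,f_n)`. -/
def RgOrbit (n : ℕ) : Set (FreeGroup (Fin n)) :=
  { r | ∃ t : Fin n → FreeGroup (Fin n),
      Relation.EqvGen (hstep n (FreeGroup (Fin n))) (fun i => FreeGroup.of i) t ∧
      ∃ i, t i = r }

/-- The dual relations: `r r' = r'' r` whenever a tuple in the Hurwitz orbit starts
with `(r, r', …)` and `r'' = r r' r⁻¹`. -/
def dualRels (n : ℕ) : Set (FreeGroup (RgOrbit n)) :=
  { x | ∃ a b c : RgOrbit n,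
      (∃ t : Fin n → FreeGroup (Fin n),
        Relation.EqvGen (hstep n (FreeGroup (Fin n))) (fun i => FreeGroup.of i) t ∧
        ∃ h : 1 < n, t ⟨0, by omega⟩ = (a : FreeGroup (Fin n)) ∧
          t ⟨1, h⟩ = (b : FreeGroup (Fin n))) ∧
      (c : FreeGroup (Fin n)) = (a : FreeGroup (Fin n)) * b * (a : FreeGroup (Fin n))⁻¹ ∧
      x = FreeGroup.of a * FreeGroup.of b * (FreeGroup.of c * FreeGroup.of a)⁻¹ }

namespace DualFree

variable {n : ℕ}

abbrev F (n : ℕ) := FreeGroup (Fin n)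

/-- The property of being in the Hurwitz orbit of the identity tuple. -/
def InOrbit (n : ℕ) (t : Fin n → F n) : Prop :=
  Relation.EqvGen (hstep n (F n)) (fun i => FreeGroup.of i) t

lemma mem_of_inOrbit {t : Fin n → F n} (ht : InOrbit n t) (i : Fin n) :
    t i ∈ RgOrbit n := ⟨t, ht, i, rfl⟩

/-- The inverse Hurwitz move. -/
def invmove (n : ℕ) (i : ℕ) (hi : i + 1 < n) (g : Fin n → F n) : Fin n → F n := fun j =>
  if (j : ℕ) = i then g ⟨i + 1, hi⟩
  else if (j : ℕ) = i + 1 then (g ⟨i + 1, hi⟩)⁻¹ * g ⟨i, by omega⟩ * g ⟨i + 1, hi⟩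
  else g j

lemma hmove_invmove (i : ℕ) (hi : i + 1 < n) (g : Fin n → F n) :
    hmove n (F n) i hi (invmove n i hi g) = g := by
  funext j
  rcases eq_or_ne (j : ℕ) i with h | h
  · have hj : j = ⟨i, by omega⟩ := Fin.ext h
    rw [hj]
    simp [hmove, invmove]
    group
  · rcases eq_or_ne (j : ℕ) (i + 1) with h' | h'
    · have hj : j = ⟨i + 1, hi⟩ := Fin.ext h'
      rw [hj]
      simp [hmove, invmove]
    · simp [hmove, invmove, h, h']

lemma hmove_at_i (i : ℕ) (hi : i + 1 < n) (g : Fin n → F n) :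
    hmove n (F n) i hi g ⟨i, by omega⟩ =
      g ⟨i, by omega⟩ * g ⟨i + 1, hi⟩ * (g ⟨i, by omega⟩)⁻¹ := by
  simp [hmove]

lemma hmove_at_succ (i : ℕ) (hi : i + 1 < n) (g : Fin n → F n) :
    hmove n (F n) i hi g ⟨i + 1, hi⟩ = g ⟨i, by omega⟩ := by
  simp [hmove]

lemma hmove_at_other (i : ℕ) (hi : i + 1 < n) (g : Fin n → F n) (j : Fin n)
    (h1 : (j : ℕ) ≠ i) (h2 : (j : ℕ) ≠ i + 1) :
    hmove n (F n) i hi g j = g j := by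
  simp [hmove, h1, h2]

lemma inOrbit_hmove {t : Fin n → F n} (ht : InOrbit n t) (i : ℕ) (hi : i + 1 < n) :
    InOrbit n (hmove n (F n) i hi t) :=
  ht.trans _ _ _ (Relation.EqvGen.rel _ _ ⟨i, hi, rfl⟩)

lemma inOrbit_invmove {t : Fin n → F n} (ht : InOrbit n t) (i : ℕ) (hi : i + 1 < n) :
    InOrbit n (invmove n i hi t) :=
  ht.trans _ _ _ (Relation.EqvGen.symm _ _
    (Relation.EqvGen.rel _ _ ⟨i, hi, (hmove_invmove i hi t).symm⟩))

lemma inOrbit_of_hmove {t : Fin n → F n} (i : ℕ) (hi : i + 1 < n)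
    (ht : InOrbit n (hmove n (F n) i hi t)) : InOrbit n t :=
  ht.trans _ _ _ (Relation.EqvGen.symm _ _ (Relation.EqvGen.rel _ _ ⟨i, hi, rfl⟩))

lemma invmove_at_i (i : ℕ) (hi : i + 1 < n) (g : Fin n → F n) :
    invmove n i hi g ⟨i, by omega⟩ = g ⟨i + 1, hi⟩ := by
  simp [invmove]

lemma invmove_at_other (i : ℕ) (hi : i + 1 < n) (g : Fin n → F n) (j : Fin n)
    (h1 : (j : ℕ) ≠ i) (h2 : (j : ℕ) ≠ i + 1) :
    invmove n i hi g j = g j := by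
  simp [invmove, h1, h2]

/-- Shift a pair of adjacent entries to the front of the tuple. -/
lemma shift : ∀ (i : ℕ) (t : Fin n → F n), InOrbit n t → ∀ hi : i + 1 < n,
    ∃ u : Fin n → F n, InOrbit n u ∧ u ⟨0, by omega⟩ = t ⟨i, by omega⟩ ∧
      u ⟨1, by omega⟩ = t ⟨i + 1, hi⟩ := by
  intro i
  induction i with
  | zero => intro t ht hi; exact ⟨t, ht, rfl, rfl⟩
  | succ i ih =>
    intro t ht hi
    set t1 := invmove n i (by omega) t with ht1
    set t2 := invmove n (i + 1) hi t1 with ht2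
    have h2 : InOrbit n t2 := inOrbit_invmove (inOrbit_invmove ht i (by omega)) (i + 1) hi
    obtain ⟨u, hu, h0, h1⟩ := ih t2 h2 (by omega)
    refine ⟨u, hu, ?_, ?_⟩
    · rw [h0]
      have e2 : t2 ⟨i, by omega⟩ = t1 ⟨i, by omega⟩ :=
        invmove_at_other (i + 1) hi t1 ⟨i, by omega⟩
          (by show i ≠ i + 1; omega) (by show i ≠ i + 1 + 1; omega)
      rw [e2]
      exact invmove_at_i i (by omega) t
    · rw [h1]
      have e2 : t2 ⟨i + 1, by omega⟩ = t1 ⟨i + 2, hi⟩ := invmove_at_i (i + 1) hi t1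
      rw [e2]
      exact invmove_at_other i (by omega) t ⟨i + 2, hi⟩
        (by show i + 2 ≠ i; omega) (by show i + 2 ≠ i + 1; omega)

lemma of_eq {r s : F n} (h : r = s) (hr : r ∈ RgOrbit n) (hs : s ∈ RgOrbit n) :
    (PresentedGroup.of ⟨r, hr⟩ : PresentedGroup (dualRels n)) = PresentedGroup.of ⟨s, hs⟩ := by
  subst h; rfl

lemma rel_holds {a b c : RgOrbit n}
    (hu : ∃ t : Fin n → F n, InOrbit n t ∧ ∃ h : 1 < n,
        t ⟨0, by omega⟩ = (a : F n) ∧ t ⟨1, h⟩ = (b : F n))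
    (hc : (c : F n) = (a : F n) * (b : F n) * (a : F n)⁻¹) :
    (PresentedGroup.of a * PresentedGroup.of b : PresentedGroup (dualRels n))
      = PresentedGroup.of c * PresentedGroup.of a := by
  have hmem : (FreeGroup.of a * FreeGroup.of b * (FreeGroup.of c * FreeGroup.of a)⁻¹)
      ∈ Subgroup.normalClosure (dualRels n) :=
    Subgroup.subset_normalClosure ⟨a, b, c, hu, hc, rfl⟩
  have h1 : (PresentedGroup.of a * PresentedGroup.of b) *
      (PresentedGroup.of c * PresentedGroup.of a)⁻¹ = (1 : PresentedGroup (dualRels n)) := by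
    have := (QuotientGroup.eq_one_iff
        (FreeGroup.of a * FreeGroup.of b * (FreeGroup.of c * FreeGroup.of a)⁻¹)).mpr hmem
    exact this
  exact mul_inv_eq_one.mp h1

/-- The conjugation relation for adjacent entries of any orbit tuple. -/
lemma conj_rel {x : Fin n → F n} (hx : InOrbit n x) (i : ℕ) (hi : i + 1 < n)
    (ma : x ⟨i, by omega⟩ ∈ RgOrbit n) (mb : x ⟨i + 1, hi⟩ ∈ RgOrbit n)
    (mc : x ⟨i, by omega⟩ * x ⟨i + 1, hi⟩ * (x ⟨i, by omega⟩)⁻¹ ∈ RgOrbit n) :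
    (PresentedGroup.of ⟨_, ma⟩ : PresentedGroup (dualRels n)) * PresentedGroup.of ⟨_, mb⟩
      = PresentedGroup.of ⟨_, mc⟩ * PresentedGroup.of ⟨_, ma⟩ := by
  obtain ⟨u, hu, h0, h1⟩ := shift i x hx hi
  exact rel_holds ⟨u, hu, by omega, h0, h1⟩ rfl

/-- The natural map `F_n → PresentedGroup (dualRels n)`. -/
def fromF (n : ℕ) : F n →* PresentedGroup (dualRels n) :=
  FreeGroup.lift fun i =>
    PresentedGroup.of ⟨FreeGroup.of i, ⟨_, Relation.EqvGen.refl _, i, rfl⟩⟩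

/-- The invariant transported along the Hurwitz action. -/
def Good (n : ℕ) (t : Fin n → F n) : Prop :=
  ∀ (i : Fin n) (h : t i ∈ RgOrbit n),
    fromF n (t i) = PresentedGroup.of (⟨t i, h⟩ : RgOrbit n)

lemma good_transport {r s : F n} (hrs : r = s) (hs : s ∈ RgOrbit n)
    (h : fromF n s = PresentedGroup.of (⟨s, hs⟩ : RgOrbit n)) (hr : r ∈ RgOrbit n) :
    fromF n r = PresentedGroup.of (⟨r, hr⟩ : RgOrbit n) := by
  subst hrs
  rw [h]

lemma good_step {x : Fin n → F n} (i : ℕ) (hi : i + 1 < n) :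
    (InOrbit n x ∧ Good n x) ↔
      (InOrbit n (hmove n (F n) i hi x) ∧ Good n (hmove n (F n) i hi x)) := by
  constructor
  · rintro ⟨hx, gx⟩
    have hyo : InOrbit n (hmove n (F n) i hi x) := inOrbit_hmove hx i hi
    refine ⟨hyo, ?_⟩
    intro j hmem
    have ma : x ⟨i, Nat.lt_of_succ_lt hi⟩ ∈ RgOrbit n := mem_of_inOrbit hx _
    have mb : x ⟨i + 1, hi⟩ ∈ RgOrbit n := mem_of_inOrbit hx _
    have mc : x ⟨i, Nat.lt_of_succ_lt hi⟩ * x ⟨i + 1, hi⟩ *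
        (x ⟨i, Nat.lt_of_succ_lt hi⟩)⁻¹ ∈ RgOrbit n := by
      rw [← hmove_at_i i hi x]
      exact mem_of_inOrbit hyo ⟨i, Nat.lt_of_succ_lt hi⟩
    rcases eq_or_ne (j : ℕ) i with h | h
    · have hj : j = ⟨i, Nat.lt_of_succ_lt hi⟩ := Fin.ext h
      subst hj
      have yval : hmove n (F n) i hi x ⟨i, Nat.lt_of_succ_lt hi⟩ =
          x ⟨i, Nat.lt_of_succ_lt hi⟩ * x ⟨i + 1, hi⟩ *
            (x ⟨i, Nat.lt_of_succ_lt hi⟩)⁻¹ := hmove_at_i i hi x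
      refine good_transport yval mc ?_ hmem
      rw [map_mul, map_mul, map_inv, gx _ ma, gx _ mb]
      have hrel := conj_rel hx i hi ma mb mc
      calc (PresentedGroup.of ⟨_, ma⟩ : PresentedGroup (dualRels n)) *
            PresentedGroup.of ⟨_, mb⟩ * (PresentedGroup.of ⟨_, ma⟩)⁻¹
          = PresentedGroup.of ⟨_, mc⟩ * PresentedGroup.of ⟨_, ma⟩ *
            (PresentedGroup.of ⟨_, ma⟩)⁻¹ := by rw [hrel]
        _ = PresentedGroup.of ⟨_, mc⟩ := by group
    · rcases eq_or_ne (j : ℕ) (i + 1) with h' | h'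
      · have hj : j = ⟨i + 1, hi⟩ := Fin.ext h'
        subst hj
        exact good_transport (hmove_at_succ i hi x) ma (gx _ ma) hmem
      · have yval : hmove n (F n) i hi x j = x j := hmove_at_other i hi x j h h'
        exact good_transport yval (yval ▸ hmem) (gx j (yval ▸ hmem)) hmem
  · rintro ⟨hyo, gy⟩
    have hx : InOrbit n x := inOrbit_of_hmove i hi hyo
    refine ⟨hx, ?_⟩
    intro j hmem
    have ma : x ⟨i, Nat.lt_of_succ_lt hi⟩ ∈ RgOrbit n := mem_of_inOrbit hx _
    have mb : x ⟨i + 1, hi⟩ ∈ RgOrbit n := mem_of_inOrbit hx _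
    have mc : x ⟨i, Nat.lt_of_succ_lt hi⟩ * x ⟨i + 1, hi⟩ *
        (x ⟨i, Nat.lt_of_succ_lt hi⟩)⁻¹ ∈ RgOrbit n := by
      rw [← hmove_at_i i hi x]
      exact mem_of_inOrbit hyo ⟨i, Nat.lt_of_succ_lt hi⟩
    have y1 : hmove n (F n) i hi x ⟨i + 1, hi⟩ = x ⟨i, Nat.lt_of_succ_lt hi⟩ :=
      hmove_at_succ i hi x
    have y0 : hmove n (F n) i hi x ⟨i, Nat.lt_of_succ_lt hi⟩ =
        x ⟨i, Nat.lt_of_succ_lt hi⟩ * x ⟨i + 1, hi⟩ *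
          (x ⟨i, Nat.lt_of_succ_lt hi⟩)⁻¹ := hmove_at_i i hi x
    have fa : fromF n (x ⟨i, Nat.lt_of_succ_lt hi⟩) = PresentedGroup.of ⟨_, ma⟩ :=
      good_transport y1.symm (mem_of_inOrbit hyo ⟨i + 1, hi⟩)
        (gy ⟨i + 1, hi⟩ _) ma
    have fc : fromF n (x ⟨i, Nat.lt_of_succ_lt hi⟩ * x ⟨i + 1, hi⟩ *
        (x ⟨i, Nat.lt_of_succ_lt hi⟩)⁻¹) = PresentedGroup.of ⟨_, mc⟩ :=
      good_transport y0.symm (mem_of_inOrbit hyo ⟨i, Nat.lt_of_succ_lt hi⟩)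
        (gy ⟨i, Nat.lt_of_succ_lt hi⟩ _) mc
    have fb : fromF n (x ⟨i + 1, hi⟩) = PresentedGroup.of ⟨_, mb⟩ := by
      have hbval : x ⟨i + 1, hi⟩ = (x ⟨i, Nat.lt_of_succ_lt hi⟩)⁻¹ *
          (x ⟨i, Nat.lt_of_succ_lt hi⟩ * x ⟨i + 1, hi⟩ *
            (x ⟨i, Nat.lt_of_succ_lt hi⟩)⁻¹) * x ⟨i, Nat.lt_of_succ_lt hi⟩ := by
        group
      have step : fromF n (x ⟨i + 1, hi⟩) =
          (fromF n (x ⟨i, Nat.lt_of_succ_lt hi⟩))⁻¹ *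
            fromF n (x ⟨i, Nat.lt_of_succ_lt hi⟩ * x ⟨i + 1, hi⟩ *
              (x ⟨i, Nat.lt_of_succ_lt hi⟩)⁻¹) * fromF n (x ⟨i, Nat.lt_of_succ_lt hi⟩) := by
        conv_lhs => rw [hbval]
        rw [map_mul, map_mul, map_inv]
      rw [step, fa, fc]
      have hrel := conj_rel hx i hi ma mb mc
      calc (PresentedGroup.of ⟨_, ma⟩ : PresentedGroup (dualRels n))⁻¹ *
            PresentedGroup.of ⟨_, mc⟩ * PresentedGroup.of ⟨_, ma⟩
          = (PresentedGroup.of ⟨_, ma⟩)⁻¹ *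
            (PresentedGroup.of ⟨_, mc⟩ * PresentedGroup.of ⟨_, ma⟩) := by group
        _ = (PresentedGroup.of ⟨_, ma⟩)⁻¹ *
            (PresentedGroup.of ⟨_, ma⟩ * PresentedGroup.of ⟨_, mb⟩) := by rw [hrel]
        _ = PresentedGroup.of ⟨_, mb⟩ := by group
    rcases eq_or_ne (j : ℕ) i with h | h
    · have hj : j = ⟨i, Nat.lt_of_succ_lt hi⟩ := Fin.ext h
      subst hj
      exact good_transport rfl ma fa hmem
    · rcases eq_or_ne (j : ℕ) (i + 1) with h' | h'
      · have hj : j = ⟨i + 1, hi⟩ := Fin.ext h'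
        subst hj
        exact good_transport rfl mb fb hmem
      · have yval : hmove n (F n) i hi x j = x j := hmove_at_other i hi x j h h'
        exact good_transport yval.symm (mem_of_inOrbit hyo j) (gy j _) hmem

lemma good_iff {x y : Fin n → F n} (h : Relation.EqvGen (hstep n (F n)) x y) :
    (InOrbit n x ∧ Good n x) ↔ (InOrbit n y ∧ Good n y) := by
  induction h with
  | rel x y hxy =>
    obtain ⟨i, hi, rfl⟩ := hxy
    exact good_step i hi
  | refl x => exact Iff.rfl
  | symm x y _ ih => exact ih.symm
  | trans x y z _ _ ih1 ih2 => exact ih1.trans ih2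

lemma good_base : InOrbit n (fun i : Fin n => FreeGroup.of i) ∧
    Good n (fun i : Fin n => FreeGroup.of i) := by
  refine ⟨Relation.EqvGen.refl _, ?_⟩
  intro i h
  have : fromF n (FreeGroup.of i) =
      PresentedGroup.of ⟨FreeGroup.of i, ⟨_, Relation.EqvGen.refl _, i, rfl⟩⟩ :=
    FreeGroup.lift_apply_of
  rw [this]

lemma fromF_of_mem {r : F n} (h : r ∈ RgOrbit n) :
    fromF n r = PresentedGroup.of (⟨r, h⟩ : RgOrbit n) := by
  obtain ⟨t, ht, i, hti⟩ := h
  have hg := ((good_iff ht).mp good_base).2 i (mem_of_inOrbit ht i)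
  subst hti
  rw [hg]

/-- The natural map `PresentedGroup (dualRels n) → F_n`. -/
def toF (n : ℕ) : PresentedGroup (dualRels n) →* F n :=
  PresentedGroup.toGroup (f := fun r : RgOrbit n => (r : F n)) (by
    rintro r ⟨a, b, c, -, hc, rfl⟩
    simp only [map_mul, map_inv, FreeGroup.lift_apply_of, hc]
    group)

lemma toF_of (r : RgOrbit n) : toF n (PresentedGroup.of r) = (r : F n) :=
  PresentedGroup.toGroup.of _

end DualFree

/-- The dual (Hurwitz) presentation presents the free group `F_n`. -/
theorem dual_presentation_is_free (n : ℕ) :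
    ∃ e : PresentedGroup (dualRels n) ≃* FreeGroup (Fin n),
      ∀ r : RgOrbit n, e (PresentedGroup.of r) = (r : FreeGroup (Fin n)) := by
  have h1 : (DualFree.toF n).comp (DualFree.fromF n) = MonoidHom.id _ := by
    ext i
    simp only [MonoidHom.comp_apply, MonoidHom.id_apply, DualFree.fromF, FreeGroup.lift_apply_of]
    exact DualFree.toF_of _
  have h2 : (DualFree.fromF n).comp (DualFree.toF n) = MonoidHom.id _ := by
    ext r
    simp only [MonoidHom.comp_apply, MonoidHom.id_apply, DualFree.toF_of]
    exact DualFree.fromF_of_mem r.2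
  refine ⟨{ toFun := DualFree.toF n, invFun := DualFree.fromF n,
            left_inv := fun x => DFunLike.congr_fun h2 x,
            right_inv := fun x => DFunLike.congr_fun h1 x,
            map_mul' := map_mul _ }, ?_⟩
  intro r
  exact DualFree.toF_of r
end
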